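/- arXiv:1509.05706 — 14 statements merged into one kernel-verified Lean document; each statement's English description precedes it below -/
import Mathlib

section
/- In the modification setup, the groupoid (G,*) is a loop: 1*x = x = x*1 for every x ∈ G, and for all a, b ∈ G there exists a unique x ∈ G with a*x = b and a unique y ∈ G with y*a = b. -/
/-- In the modification setup, the groupoid (G,*) is a loop. -/
theorem stmt_0 {G : Type*} [Group G] (Z K N : Subgroup G)
    (hZK : Z ≤ K) (hKN : K ≤ N)
    (hNnormal : N.Normal)
    (hNab : ∀ a ∈ N, ∀ b ∈ N, a * b = b * a)
    (hGN : ∀ x y : G, x⁻¹ * y⁻¹ * x * y ∈ N)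
    (hZcentral : Z ≤ Subgroup.center G)
    (hKnormal : K.Normal)
    (hNK : ∀ n ∈ N, ∀ g : G, n⁻¹ * g⁻¹ * n * g ∈ K)
    (μ : G → G → G)
    (hμZ : ∀ x y : G, μ x y ∈ Z)
    (hμK : ∀ x x' y y' : G, x⁻¹ * x' ∈ K → y⁻¹ * y' ∈ K → μ x y = μ x' y')
    (hμ1 : ∀ x : G, μ x 1 = 1) (hμ1' : ∀ x : G, μ 1 x = 1)
    (star : G → G → G) (hstar : ∀ x y : G, star x y = x * y * μ x y) :
    (∀ x : G, star 1 x = x ∧ star x 1 = x) ∧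
    (∀ a b : G, ∃! x : G, star a x = b) ∧
    (∀ a b : G, ∃! y : G, star y a = b) := by
  have hμK' : ∀ x y : G, μ x y ∈ K := fun x y => hZK (hμZ x y)
  have comm : ∀ x y : G, ∀ g : G, g * μ x y = μ x y * g := fun x y g =>
    Subgroup.mem_center_iff.mp (hZcentral (hμZ x y)) g
  refine ⟨fun x => ⟨by rw [hstar, hμ1', one_mul, mul_one],
      by rw [hstar, hμ1, mul_one, mul_one]⟩, ?_, ?_⟩
  · intro a b
    have uniq : ∀ x x' : G, star a x = star a x' → x = x' := by
      intro x x' h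
      rw [hstar, hstar] at h
      have h2 : x * μ a x = x' * μ a x' := by
        have h' : a * (x * μ a x) = a * (x' * μ a x') := by
          rw [← mul_assoc, ← mul_assoc]; exact h
        exact mul_left_cancel h'
      have hk : x⁻¹ * x' ∈ K := by
        have he : x⁻¹ * x' = μ a x * (μ a x')⁻¹ := by
          calc x⁻¹ * x' = x⁻¹ * (x' * μ a x') * (μ a x')⁻¹ := by group
            _ = x⁻¹ * (x * μ a x) * (μ a x')⁻¹ := by rw [h2]
            _ = μ a x * (μ a x')⁻¹ := by group
        rw [he]
        exact K.mul_mem (hμK' a x) (K.inv_mem (hμK' a x'))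
      have heq : μ a x = μ a x' := hμK a a x x' (by simpa using K.one_mem) hk
      rw [heq] at h2
      exact mul_right_cancel h2
    set c := μ a (a⁻¹ * b) with hc
    have h1 : μ a (a⁻¹ * b * c⁻¹) = c := by
      refine (hμK a a (a⁻¹ * b) (a⁻¹ * b * c⁻¹) (by simpa using K.one_mem) ?_).symm
      have he : (a⁻¹ * b)⁻¹ * (a⁻¹ * b * c⁻¹) = c⁻¹ := by group
      rw [he]; exact K.inv_mem (hμK' a (a⁻¹ * b))
    have hsol : star a (a⁻¹ * b * c⁻¹) = b := by
      rw [hstar, h1]; group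
    exact ⟨a⁻¹ * b * c⁻¹, hsol, fun x hx => uniq x (a⁻¹ * b * c⁻¹) (hx.trans hsol.symm)⟩
  · intro a b
    have uniq : ∀ y y' : G, star y a = star y' a → y = y' := by
      intro y y' h
      rw [hstar, hstar] at h
      have h2 : y * μ y a = y' * μ y' a := by
        have h' : y * μ y a * a = y' * μ y' a * a := by
          calc y * μ y a * a = y * (μ y a * a) := by group
            _ = y * (a * μ y a) := by rw [comm]
            _ = y * a * μ y a := by group
            _ = y' * a * μ y' a := h
            _ = y' * (a * μ y' a) := by group
            _ = y' * (μ y' a * a) := by rw [comm]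
            _ = y' * μ y' a * a := by group
        exact mul_right_cancel h'
      have hk : y⁻¹ * y' ∈ K := by
        have he : y⁻¹ * y' = μ y a * (μ y' a)⁻¹ := by
          calc y⁻¹ * y' = y⁻¹ * (y' * μ y' a) * (μ y' a)⁻¹ := by group
            _ = y⁻¹ * (y * μ y a) * (μ y' a)⁻¹ := by rw [h2]
            _ = μ y a * (μ y' a)⁻¹ := by group
        rw [he]
        exact K.mul_mem (hμK' y a) (K.inv_mem (hμK' y' a))
      have heq : μ y a = μ y' a := hμK y y' a a hk (by simpa using K.one_mem)
      rw [heq] at h2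
      exact mul_right_cancel h2
    set c := μ (b * a⁻¹) a with hc
    have h1 : μ (b * c⁻¹ * a⁻¹) a = c := by
      refine (hμK (b * a⁻¹) (b * c⁻¹ * a⁻¹) a a ?_ (by simpa using K.one_mem)).symm
      have he : (b * a⁻¹)⁻¹ * (b * c⁻¹ * a⁻¹) = a * c⁻¹ * a⁻¹ := by group
      rw [he]
      exact hKnormal.conj_mem _ (K.inv_mem (hμK' (b * a⁻¹) a)) a
    have hsol : star (b * c⁻¹ * a⁻¹) a = b := by
      rw [hstar, h1]
      group
    exact ⟨b * c⁻¹ * a⁻¹, hsol, fun y hy => uniq y (b * c⁻¹ * a⁻¹) (hy.trans hsol.symm)⟩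
end

section
/- In the modification setup, every z ∈ Z satisfies z*x = x*z, z*(x*y) = (z*x)*y, x*(z*y) = (x*z)*y, and x*(y*z) = (x*y)*z for all x, y ∈ G; that is, Z is contained in the center of the loop (G,*). -/
/-- In the modification setup, Z is contained in the center of the loop (G,*). -/
theorem stmt_1 {G : Type*} [Group G] (Z K N : Subgroup G)
    (hZK : Z ≤ K) (hKN : K ≤ N)
    (hNnormal : N.Normal)
    (hNab : ∀ a ∈ N, ∀ b ∈ N, a * b = b * a)
    (hGN : ∀ x y : G, x⁻¹ * y⁻¹ * x * y ∈ N)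
    (hZcentral : Z ≤ Subgroup.center G)
    (hKnormal : K.Normal)
    (hNK : ∀ n ∈ N, ∀ g : G, n⁻¹ * g⁻¹ * n * g ∈ K)
    (μ : G → G → G)
    (hμZ : ∀ x y : G, μ x y ∈ Z)
    (hμK : ∀ x x' y y' : G, x⁻¹ * x' ∈ K → y⁻¹ * y' ∈ K → μ x y = μ x' y')
    (hμ1 : ∀ x : G, μ x 1 = 1) (hμ1' : ∀ x : G, μ 1 x = 1)
    (star : G → G → G) (hstar : ∀ x y : G, star x y = x * y * μ x y) :
    ∀ z ∈ Z, ∀ x y : G,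
      star z x = star x z ∧
      star z (star x y) = star (star z x) y ∧
      star x (star z y) = star (star x z) y ∧
      star x (star y z) = star (star x y) z := by
  intro z hz x y
  have zc : ∀ g : G, z * g = g * z := fun g =>
    (Subgroup.mem_center_iff.mp (hZcentral hz) g).symm
  have zK : z ∈ K := hZK hz
  have hKtriv : ∀ g : G, g⁻¹ * g ∈ K := fun g => by simp [K.one_mem]
  have hconj : ∀ g : G, g⁻¹ * (z * g) ∈ K := fun g => by
    simpa [mul_assoc] using hKnormal.conj_mem z zK g⁻¹
  have hconj' : ∀ g : G, g⁻¹ * (g * z) ∈ K := fun g => by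
    have h1 : g⁻¹ * (g * z) = z := by group
    rw [h1]; exact zK
  have hμzL : ∀ g h : G, μ (z * g) h = μ g h := fun g h =>
    (hμK g (z * g) h h (hconj g) (hKtriv h)).symm
  have hμzR : ∀ g h : G, μ g (z * h) = μ g h := fun g h =>
    (hμK g g h (z * h) (hKtriv g) (hconj h)).symm
  have hμzL' : ∀ g h : G, μ (g * z) h = μ g h := fun g h =>
    (hμK g (g * z) h h (hconj' g) (hKtriv h)).symm
  have hμzR' : ∀ g h : G, μ g (h * z) = μ g h := fun g h =>
    (hμK g g h (h * z) (hKtriv g) (hconj' h)).symm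
  have hμz1 : ∀ g : G, μ z g = 1 := fun g => by
    rw [hμK z 1 g g (by simpa using K.inv_mem zK) (hKtriv g), hμ1']
  have hμz1' : ∀ g : G, μ g z = 1 := fun g => by
    rw [hμK g g z 1 (hKtriv g) (by simpa using zK), hμ1]
  refine ⟨?_, ?_, ?_, ?_⟩
  · rw [hstar, hstar, hμz1, hμz1', mul_one, mul_one, zc]
  · rw [hstar x y, hstar z x, hstar, hstar]
    simp only [hμz1, mul_one]
    rw [hμzL]
    group
  · rw [hstar z y, hstar x z, hstar, hstar]
    simp only [hμz1, hμz1', mul_one]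
    rw [hμzR, hμzL']
    group
  · rw [hstar y z, hstar x y, hstar, hstar]
    simp only [hμz1', mul_one]
    rw [hμzR']
    have hc : z * μ x y = μ x y * z :=
      Subgroup.mem_center_iff.mp (hZcentral (hμZ x y)) z
    rw [show x * y * μ x y * z = x * y * z * μ x y by
      rw [mul_assoc (x * y), ← hc]; group]
    group
end

section
/- In the modification setup, the left and right inner mappings pairwise commute: for all x, y, u, v ∈ G, L(x,y)∘L(u,v) = L(u,v)∘L(x,y), R(x,y)∘R(u,v) = R(u,v)∘R(x,y), and L(x,y)∘R(u,v) = R(u,v)∘L(x,y) as maps G → G; hence the group of permutations of G generated by all L(x,y) and R(x,y) is abelian. -/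
/-- In the modification setup, the left and right inner mappings pairwise commute. -/
theorem stmt_3 {G : Type*} [Group G] (Z K N : Subgroup G)
    (hZK : Z ≤ K) (hKN : K ≤ N)
    (hNnormal : N.Normal)
    (hNab : ∀ a ∈ N, ∀ b ∈ N, a * b = b * a)
    (hGN : ∀ x y : G, x⁻¹ * y⁻¹ * x * y ∈ N)
    (hZcentral : Z ≤ Subgroup.center G)
    (hKnormal : K.Normal)
    (hNK : ∀ n ∈ N, ∀ g : G, n⁻¹ * g⁻¹ * n * g ∈ K)
    (μ : G → G → G)
    (hμZ : ∀ x y : G, μ x y ∈ Z)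
    (hμK : ∀ x x' y y' : G, x⁻¹ * x' ∈ K → y⁻¹ * y' ∈ K → μ x y = μ x' y')
    (hμ1 : ∀ x : G, μ x 1 = 1) (hμ1' : ∀ x : G, μ 1 x = 1)
    (A : G → G → G → G)
    (hA : ∀ x y z : G, A x y z = μ x y * μ (x * y) z * (μ x (y * z))⁻¹ * (μ y z)⁻¹)
    (L : G → G → G → G) (hL : ∀ x y w : G, L x y w = w * A x y w)
    (R : G → G → G → G) (hR : ∀ x y w : G, R x y w = w * A w x y) :
    ∀ x y u v : G,
      L x y ∘ L u v = L u v ∘ L x y ∧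
      R x y ∘ R u v = R u v ∘ R x y ∧
      L x y ∘ R u v = R u v ∘ L x y := by
  have hAZ : ∀ x y z : G, A x y z ∈ Z := by
    intro x y z
    rw [hA]
    exact mul_mem (mul_mem (mul_mem (hμZ x y) (hμZ _ z)) (inv_mem (hμZ x _)))
      (inv_mem (hμZ y z))
  have hAc : ∀ x y z : G, A x y z ∈ Subgroup.center G := fun x y z => hZcentral (hAZ x y z)
  have hAK : ∀ x y z : G, A x y z ∈ K := fun x y z => hZK (hAZ x y z)
  -- invariance of A in the third argument modulo K
  have key1 : ∀ x y w a : G, a ∈ K → A x y (w * a) = A x y w := by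
    intro x y w a ha
    have e : ∀ p : G, p⁻¹ * p ∈ K := fun p => by simp [one_mem]
    have ha' : ∀ p : G, (p * a)⁻¹ * p ∈ K := by
      intro p; simpa [mul_inv_rev, mul_assoc] using inv_mem ha
    rw [hA, hA, hμK (x * y) (x * y) (w * a) w (e _) (ha' w),
      hμK x x (y * (w * a)) (y * w) (e _) (by convert inv_mem ha using 1; group),
      hμK y y (w * a) w (e _) (ha' w)]
  -- invariance of A in the first argument modulo K
  have key2 : ∀ x y w a : G, a ∈ K → A (w * a) x y = A w x y := by
    intro x y w a ha
    have e : ∀ p : G, p⁻¹ * p ∈ K := fun p => by simp [one_mem]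
    have ha' : ∀ p : G, (p * a)⁻¹ * p ∈ K := by
      intro p; simpa [mul_inv_rev, mul_assoc] using inv_mem ha
    have h2 : (w * a * x)⁻¹ * (w * x) ∈ K := by
      have : (w * a * x)⁻¹ * (w * x) = x⁻¹ * a⁻¹ * x⁻¹⁻¹ := by group
      rw [this]; exact hKnormal.conj_mem _ (inv_mem ha) x⁻¹
    rw [hA, hA, hμK (w * a) w x x (ha' w) (e _), hμK (w * a * x) (w * x) y y h2 (e _),
      hμK (w * a) w (x * y) (x * y) (ha' w) (e _)]
  intro x y u v
  refine ⟨?_, ?_, ?_⟩ <;> funext w <;>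
    simp only [Function.comp_apply, hL, hR]
  · rw [key1 x y w (A u v w) (hAK u v w), key1 u v w (A x y w) (hAK x y w),
      mul_assoc, mul_assoc, Subgroup.mem_center_iff.mp (hAc x y w) (A u v w)]
  · rw [key2 x y w (A w u v) (hAK w u v), key2 u v w (A w x y) (hAK w x y),
      mul_assoc, mul_assoc, Subgroup.mem_center_iff.mp (hAc w x y) (A w u v)]
  · rw [key1 x y w (A w u v) (hAK w u v), key2 u v w (A x y w) (hAK x y w),
      mul_assoc, mul_assoc, Subgroup.mem_center_iff.mp (hAc x y w) (A w u v)]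
end

section
/- In the modification setup, for all x, y ∈ G one has x * (y^x · μ(y,x) · μ(x,y^x)⁻¹) = y * x; that is, the middle inner mapping T(x) of the loop (G,*) (the unique solution u of x*u = y*x, as a function of y) is given by T(x)y = y^x · μ(y,x) · μ(x,y^x)⁻¹. -/
/-- In the modification setup, the middle inner mapping of the loop (G,*) is given by
T(x)y = y^x · μ(y,x) · μ(x,y^x)⁻¹. -/
theorem stmt_4 {G : Type*} [Group G] (Z K N : Subgroup G)
    (hZK : Z ≤ K) (hKN : K ≤ N)
    (hNnormal : N.Normal)
    (hNab : ∀ a ∈ N, ∀ b ∈ N, a * b = b * a)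
    (hGN : ∀ x y : G, x⁻¹ * y⁻¹ * x * y ∈ N)
    (hZcentral : Z ≤ Subgroup.center G)
    (hKnormal : K.Normal)
    (hNK : ∀ n ∈ N, ∀ g : G, n⁻¹ * g⁻¹ * n * g ∈ K)
    (μ : G → G → G)
    (hμZ : ∀ x y : G, μ x y ∈ Z)
    (hμK : ∀ x x' y y' : G, x⁻¹ * x' ∈ K → y⁻¹ * y' ∈ K → μ x y = μ x' y')
    (hμ1 : ∀ x : G, μ x 1 = 1) (hμ1' : ∀ x : G, μ 1 x = 1)
    (star : G → G → G) (hstar : ∀ x y : G, star x y = x * y * μ x y) :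
    ∀ x y : G,
      star x ((x⁻¹ * y * x) * μ y x * (μ x (x⁻¹ * y * x))⁻¹) = star y x := by
  intro x y
  have h2 : ((x⁻¹ * y * x) * μ y x * (μ x (x⁻¹ * y * x))⁻¹)⁻¹ * (x⁻¹ * y * x)
      = μ x (x⁻¹ * y * x) * (μ y x)⁻¹ := by group
  have hm : μ x ((x⁻¹ * y * x) * μ y x * (μ x (x⁻¹ * y * x))⁻¹) = μ x (x⁻¹ * y * x) := by
    refine (hμK x x _ (x⁻¹ * y * x) (by simpa using K.one_mem) ?_).symm.symm
    rw [h2]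
    exact K.mul_mem (hZK (hμZ x _)) (K.inv_mem (hZK (hμZ y x)))
  rw [hstar, hstar, hm]
  group
end

section
/- In the modification setup, assume conditions (C1) and (C2). Then for all x, y, z ∈ G such that at least one of x, y, z lies in N, one has (x*y)*z = x*(y*z); that is, N is contained in the nucleus of the loop (G,*). -/
/-- In the modification setup, under (C1) and (C2), N is contained in the nucleus
of the loop (G,*). -/
theorem stmt_5 {G : Type*} [Group G] (Z K N : Subgroup G)
    (hZK : Z ≤ K) (hKN : K ≤ N)
    (hNnormal : N.Normal)
    (hNab : ∀ a ∈ N, ∀ b ∈ N, a * b = b * a)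
    (hGN : ∀ x y : G, x⁻¹ * y⁻¹ * x * y ∈ N)
    (hZcentral : Z ≤ Subgroup.center G)
    (hKnormal : K.Normal)
    (hNK : ∀ n ∈ N, ∀ g : G, n⁻¹ * g⁻¹ * n * g ∈ K)
    (μ : G → G → G)
    (hμZ : ∀ x y : G, μ x y ∈ Z)
    (hμK : ∀ x x' y y' : G, x⁻¹ * x' ∈ K → y⁻¹ * y' ∈ K → μ x y = μ x' y')
    (hμ1 : ∀ x : G, μ x 1 = 1) (hμ1' : ∀ x : G, μ 1 x = 1)
    (star : G → G → G) (hstar : ∀ x y : G, star x y = x * y * μ x y)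
    (hC1 : ∀ x y z : G, (x ∈ N ∨ y ∈ N ∨ z ∈ N) → μ (x * y) z = μ x z * μ y z)
    (hC2 : ∀ x y z : G, (x ∈ N ∨ y ∈ N ∨ z ∈ N) → μ x (y * z) = μ x y * μ x z) :
    ∀ x y z : G, (x ∈ N ∨ y ∈ N ∨ z ∈ N) →
      star (star x y) z = star x (star y z) := by
  intro x y z h
  have hc : ∀ a b g : G, g * μ a b = μ a b * g := fun a b g =>
    Subgroup.mem_center_iff.mp (hZcentral (hμZ a b)) g
  have h1 : μ (x * y * μ x y) z = μ (x * y) z := by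
    apply hμK
    · have : (x * y * μ x y)⁻¹ * (x * y) = (μ x y)⁻¹ := by group
      rw [this]; exact K.inv_mem (hZK (hμZ x y))
    · rw [inv_mul_cancel]; exact K.one_mem
  have h2 : μ x (y * z * μ y z) = μ x (y * z) := by
    apply hμK
    · rw [inv_mul_cancel]; exact K.one_mem
    · have : (y * z * μ y z)⁻¹ * (y * z) = (μ y z)⁻¹ := by group
      rw [this]; exact K.inv_mem (hZK (hμZ y z))
  simp only [hstar]
  rw [h1, h2, hC1 x y z h, hC2 x y z h]
  calc x * y * μ x y * z * (μ x z * μ y z)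
      = x * y * (μ x y * z) * (μ x z * μ y z) := by simp [mul_assoc]
    _ = x * y * (z * μ x y) * (μ x z * μ y z) := by rw [hc x y z]
    _ = x * y * z * (μ x y * μ x z * μ y z) := by simp [mul_assoc]
    _ = x * y * z * (μ y z * (μ x y * μ x z)) := by
        rw [show μ y z * (μ x y * μ x z) = μ x y * μ x z * μ y z from by
          rw [← mul_assoc, hc x y (μ y z), mul_assoc, hc x z (μ y z), ← mul_assoc]]
    _ = x * (y * z * μ y z) * (μ x y * μ x z) := by simp [mul_assoc]
end

section
/- In the modification setup, assume conditions (C1) and (C2). Then the middle inner mappings pairwise commute, T(x)∘T(y) = T(y)∘T(x) for all x, y ∈ G, if and only if condition (C3) holds; consequently (combined with the unconditional commuting of left and right inner mappings and their commuting with the T(x)), the inner mapping group of the loop (G,*) is abelian if and only if (C3) holds. -/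
private lemma conj_mul_central' {G : Type*} [Group G] {x a c : G}
    (h : c * x = x * c) : x⁻¹ * (a * c) * x = x⁻¹ * a * x * c := by
  calc x⁻¹ * (a * c) * x = x⁻¹ * a * (c * x) := by group
    _ = x⁻¹ * a * (x * c) := by rw [h]
    _ = x⁻¹ * a * x * c := by group

set_option maxHeartbeats 2000000 in
/-- In the modification setup, under (C1) and (C2), the middle inner mappings pairwise
commute if and only if condition (C3) holds. -/
theorem stmt_7 {G : Type*} [Group G] (Z K N : Subgroup G)
    (hZK : Z ≤ K) (hKN : K ≤ N)
    (hNnormal : N.Normal)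
    (hNab : ∀ a ∈ N, ∀ b ∈ N, a * b = b * a)
    (hGN : ∀ x y : G, x⁻¹ * y⁻¹ * x * y ∈ N)
    (hZcentral : Z ≤ Subgroup.center G)
    (hKnormal : K.Normal)
    (hNK : ∀ n ∈ N, ∀ g : G, n⁻¹ * g⁻¹ * n * g ∈ K)
    (μ : G → G → G)
    (hμZ : ∀ x y : G, μ x y ∈ Z)
    (hμK : ∀ x x' y y' : G, x⁻¹ * x' ∈ K → y⁻¹ * y' ∈ K → μ x y = μ x' y')
    (hμ1 : ∀ x : G, μ x 1 = 1) (hμ1' : ∀ x : G, μ 1 x = 1)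
    (star : G → G → G) (hstar : ∀ x y : G, star x y = x * y * μ x y)
    (δ : G → G → G) (hδ : ∀ x y : G, δ x y = μ x y * (μ y x)⁻¹)
    (T : G → G → G)
    (hT : ∀ x w : G, T x w = (x⁻¹ * w * x) * μ w x * (μ x (x⁻¹ * w * x))⁻¹)
    (hC1 : ∀ x y z : G, (x ∈ N ∨ y ∈ N ∨ z ∈ N) → μ (x * y) z = μ x z * μ y z)
    (hC2 : ∀ x y z : G, (x ∈ N ∨ y ∈ N ∨ z ∈ N) → μ x (y * z) = μ x y * μ x z) :
    (∀ x y : G, T x ∘ T y = T y ∘ T x) ↔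
    (∀ x y z : G,
      (y * x)⁻¹ * z * (y * x) * δ (z⁻¹ * y⁻¹ * z * y) x =
      (x * y)⁻¹ * z * (x * y) * δ (z⁻¹ * x⁻¹ * z * x) y) := by
  -- μ-values are central and lie in K
  have hcen : ∀ a b g : G, g * μ a b = μ a b * g := fun a b g =>
    (Subgroup.mem_center_iff.mp (hZcentral (hμZ a b))) g
  have hco : ∀ a b g : G, Commute (μ a b) g := fun a b g => (hcen a b g).symm
  have hμKmem : ∀ a b : G, μ a b ∈ K := fun a b => hZK (hμZ a b)
  -- the symmetric central factor
  let S : G → G → G → G := fun x y w =>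
    μ w y * (μ y w)⁻¹ * μ w x * (μ x w)⁻¹ *
      (μ y (w⁻¹ * y⁻¹ * w * y))⁻¹ * (μ x (w⁻¹ * x⁻¹ * w * x))⁻¹
  -- center-valued version of μ
  let m : G → G → Subgroup.center G := fun a b => ⟨μ a b, hZcentral (hμZ a b)⟩
  have hm : ∀ a b : G, μ a b = (m a b : G) := fun _ _ => rfl
  have Ssym : ∀ x y w : G, S x y w = S y x w := by
    intro x y w
    show μ w y * (μ y w)⁻¹ * μ w x * (μ x w)⁻¹ *
        (μ y (w⁻¹ * y⁻¹ * w * y))⁻¹ * (μ x (w⁻¹ * x⁻¹ * w * x))⁻¹ =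
      μ w x * (μ x w)⁻¹ * μ w y * (μ y w)⁻¹ *
        (μ x (w⁻¹ * x⁻¹ * w * x))⁻¹ * (μ y (w⁻¹ * y⁻¹ * w * y))⁻¹
    rw [hm w y, hm y w, hm w x, hm x w, hm y (w⁻¹*y⁻¹*w*y), hm x (w⁻¹*x⁻¹*w*x)]
    norm_cast
    simp [mul_inv_rev, mul_comm, mul_left_comm, mul_assoc]
    ac_rfl
  -- the key computation
  have key : ∀ x y w : G,
      T x (T y w) =
        ((y * x)⁻¹ * w * (y * x) * δ (w⁻¹ * y⁻¹ * w * y) x) * S x y w := by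
    intro x y w
    rw [hT x (T y w), hT y w, hδ]
    -- μ does not see the central K-factors
    have hA1 : μ ((y⁻¹ * w * y) * μ w y * (μ y (y⁻¹ * w * y))⁻¹) x = μ (y⁻¹ * w * y) x := by
      refine hμK _ _ _ _ ?_ (by simpa using K.one_mem)
      have e : ((y⁻¹ * w * y) * μ w y * (μ y (y⁻¹ * w * y))⁻¹)⁻¹ * (y⁻¹ * w * y)
          = μ y (y⁻¹ * w * y) * (μ w y)⁻¹ := by group
      rw [e]; exact K.mul_mem (hμKmem _ _) (K.inv_mem (hμKmem _ _))
    have hA2 : x⁻¹ * ((y⁻¹ * w * y) * μ w y * (μ y (y⁻¹ * w * y))⁻¹) * x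
        = (y * x)⁻¹ * w * (y * x) * μ w y * (μ y (y⁻¹ * w * y))⁻¹ := by
      calc x⁻¹ * ((y⁻¹ * w * y) * μ w y * (μ y (y⁻¹ * w * y))⁻¹) * x
          = x⁻¹ * ((y⁻¹ * w * y) * μ w y) * x * (μ y (y⁻¹ * w * y))⁻¹ :=
            conj_mul_central' ((hco y (y⁻¹ * w * y) x).inv_left.eq)
        _ = x⁻¹ * (y⁻¹ * w * y) * x * μ w y * (μ y (y⁻¹ * w * y))⁻¹ := by
            rw [conj_mul_central' ((hco w y x).eq)]
        _ = (y * x)⁻¹ * w * (y * x) * μ w y * (μ y (y⁻¹ * w * y))⁻¹ := by group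
    rw [hA1, hA2]
    have hA3 : μ x ((y * x)⁻¹ * w * (y * x) * μ w y * (μ y (y⁻¹ * w * y))⁻¹)
        = μ x ((y * x)⁻¹ * w * (y * x)) := by
      refine hμK _ _ _ _ (by simpa using K.one_mem) ?_
      have e : ((y * x)⁻¹ * w * (y * x) * μ w y * (μ y (y⁻¹ * w * y))⁻¹)⁻¹ *
          ((y * x)⁻¹ * w * (y * x)) = μ y (y⁻¹ * w * y) * (μ w y)⁻¹ := by group
      rw [e]; exact K.mul_mem (hμKmem _ _) (K.inv_mem (hμKmem _ _))
    rw [hA3]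
    -- expansions via (C1), (C2)
    have h4 : μ (y⁻¹ * w * y) x = μ w x * μ (w⁻¹ * y⁻¹ * w * y) x := by
      rw [show (y⁻¹ * w * y : G) = w * (w⁻¹ * y⁻¹ * w * y) from by group]
      exact hC1 w _ x (Or.inr (Or.inl (hGN w y)))
    have h5 : μ y (y⁻¹ * w * y) = μ y w * μ y (w⁻¹ * y⁻¹ * w * y) := by
      rw [show (y⁻¹ * w * y : G) = w * (w⁻¹ * y⁻¹ * w * y) from by group]
      exact hC2 y w _ (Or.inr (Or.inr (hGN w y)))
    have h6 : μ x ((y * x)⁻¹ * w * (y * x))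
        = μ x w * (μ x (w⁻¹ * x⁻¹ * w * x) * μ x (w⁻¹ * y⁻¹ * w * y)) := by
      have e1 : ((y * x)⁻¹ * w * (y * x) : G)
          = w * (w⁻¹ * (y * x)⁻¹ * w * (y * x)) := by group
      rw [e1, hC2 x w _ (Or.inr (Or.inr (hGN w (y * x))))]
      congr 1
      have e2 : μ x (w⁻¹ * (y * x)⁻¹ * w * (y * x))
          = μ x ((w⁻¹ * x⁻¹ * w * x) * (w⁻¹ * y⁻¹ * w * y)) := by
        refine hμK _ _ _ _ (by simpa using K.one_mem) ?_
        have e3 : (w⁻¹ * (y * x)⁻¹ * w * (y * x))⁻¹ *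
            ((w⁻¹ * x⁻¹ * w * x) * (w⁻¹ * y⁻¹ * w * y))
            = ((w⁻¹ * y⁻¹ * w * y)⁻¹ * x⁻¹ * (w⁻¹ * y⁻¹ * w * y) * x)⁻¹ := by group
        rw [e3]; exact K.inv_mem (hNK _ (hGN w y) x)
      rw [e2]
      exact hC2 x _ _ (Or.inr (Or.inl (hGN w x)))
    rw [h4, h5, h6]
    -- now everything is ((y*x)⁻¹*w*(y*x)) times central μ-factors
    show (y * x)⁻¹ * w * (y * x) * μ w y * (μ y w * μ y (w⁻¹ * y⁻¹ * w * y))⁻¹ *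
        (μ w x * μ (w⁻¹ * y⁻¹ * w * y) x) *
        (μ x w * (μ x (w⁻¹ * x⁻¹ * w * x) * μ x (w⁻¹ * y⁻¹ * w * y)))⁻¹ =
      (y * x)⁻¹ * w * (y * x) *
        (μ (w⁻¹ * y⁻¹ * w * y) x * (μ x (w⁻¹ * y⁻¹ * w * y))⁻¹) *
        (μ w y * (μ y w)⁻¹ * μ w x * (μ x w)⁻¹ *
          (μ y (w⁻¹ * y⁻¹ * w * y))⁻¹ * (μ x (w⁻¹ * x⁻¹ * w * x))⁻¹)
    have hcc : (m w y * (m y w * m y (w⁻¹*y⁻¹*w*y))⁻¹ * (m w x * m (w⁻¹*y⁻¹*w*y) x) *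
          (m x w * (m x (w⁻¹*x⁻¹*w*x) * m x (w⁻¹*y⁻¹*w*y)))⁻¹ : Subgroup.center G)
        = m (w⁻¹*y⁻¹*w*y) x * (m x (w⁻¹*y⁻¹*w*y))⁻¹ *
          (m w y * (m y w)⁻¹ * m w x * (m x w)⁻¹ * (m y (w⁻¹*y⁻¹*w*y))⁻¹ *
            (m x (w⁻¹*x⁻¹*w*x))⁻¹) := by
      simp [mul_inv_rev, mul_comm, mul_left_comm, mul_assoc]
      ac_rfl
    calc (y * x)⁻¹ * w * (y * x) * μ w y * (μ y w * μ y (w⁻¹ * y⁻¹ * w * y))⁻¹ *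
          (μ w x * μ (w⁻¹ * y⁻¹ * w * y) x) *
          (μ x w * (μ x (w⁻¹ * x⁻¹ * w * x) * μ x (w⁻¹ * y⁻¹ * w * y)))⁻¹
        = (y * x)⁻¹ * w * (y * x) *
            (μ w y * (μ y w * μ y (w⁻¹ * y⁻¹ * w * y))⁻¹ *
              (μ w x * μ (w⁻¹ * y⁻¹ * w * y) x) *
              (μ x w * (μ x (w⁻¹ * x⁻¹ * w * x) * μ x (w⁻¹ * y⁻¹ * w * y)))⁻¹) := by
          group
      _ = (y * x)⁻¹ * w * (y * x) *
            (μ (w⁻¹ * y⁻¹ * w * y) x * (μ x (w⁻¹ * y⁻¹ * w * y))⁻¹ *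
              (μ w y * (μ y w)⁻¹ * μ w x * (μ x w)⁻¹ * (μ y (w⁻¹ * y⁻¹ * w * y))⁻¹ *
                (μ x (w⁻¹ * x⁻¹ * w * x))⁻¹)) :=
          congrArg (fun t => (y * x)⁻¹ * w * (y * x) * t) (congrArg Subtype.val hcc)
      _ = (y * x)⁻¹ * w * (y * x) *
            (μ (w⁻¹ * y⁻¹ * w * y) x * (μ x (w⁻¹ * y⁻¹ * w * y))⁻¹) *
            (μ w y * (μ y w)⁻¹ * μ w x * (μ x w)⁻¹ *
              (μ y (w⁻¹ * y⁻¹ * w * y))⁻¹ * (μ x (w⁻¹ * x⁻¹ * w * x))⁻¹) := by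
          group
  constructor
  · intro h x y z
    have h1 : T x (T y z) = T y (T x z) := by simpa using congrFun (h x y) z
    rw [key x y z, key y x z, Ssym y x z] at h1
    exact mul_right_cancel h1
  · intro h x y
    funext w
    show T x (T y w) = T y (T x w)
    rw [key x y w, key y x w, Ssym y x w, h x y w]
end

section
/- In the modification setup, assume condition (C3). Then for all x, y, z ∈ G one has [z,[y⁻¹,x⁻¹]] = δ([z,x],y)·δ([z,y],x)⁻¹ = (z^{xy})⁻¹·z^{yx}; in particular the double commutator [z,[y⁻¹,x⁻¹]] lies in Z and hence in the center of G. -/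
/-- In the modification setup, under (C3), the double commutator [z,[y⁻¹,x⁻¹]]
equals δ([z,x],y)·δ([z,y],x)⁻¹ = (z^{xy})⁻¹·z^{yx} and lies in Z, hence in Z(G). -/
theorem stmt_8 {G : Type*} [Group G] (Z K N : Subgroup G)
    (hZK : Z ≤ K) (hKN : K ≤ N)
    (hNnormal : N.Normal)
    (hNab : ∀ a ∈ N, ∀ b ∈ N, a * b = b * a)
    (hGN : ∀ x y : G, x⁻¹ * y⁻¹ * x * y ∈ N)
    (hZcentral : Z ≤ Subgroup.center G)
    (hKnormal : K.Normal)
    (hNK : ∀ n ∈ N, ∀ g : G, n⁻¹ * g⁻¹ * n * g ∈ K)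
    (μ : G → G → G)
    (hμZ : ∀ x y : G, μ x y ∈ Z)
    (hμK : ∀ x x' y y' : G, x⁻¹ * x' ∈ K → y⁻¹ * y' ∈ K → μ x y = μ x' y')
    (hμ1 : ∀ x : G, μ x 1 = 1) (hμ1' : ∀ x : G, μ 1 x = 1)
    (δ : G → G → G) (hδ : ∀ x y : G, δ x y = μ x y * (μ y x)⁻¹)
    (hC3 : ∀ x y z : G,
      (y * x)⁻¹ * z * (y * x) * δ (z⁻¹ * y⁻¹ * z * y) x =
      (x * y)⁻¹ * z * (x * y) * δ (z⁻¹ * x⁻¹ * z * x) y) :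
    ∀ x y z : G,
      z⁻¹ * (y⁻¹⁻¹ * x⁻¹⁻¹ * y⁻¹ * x⁻¹)⁻¹ * z * (y⁻¹⁻¹ * x⁻¹⁻¹ * y⁻¹ * x⁻¹) =
        δ (z⁻¹ * x⁻¹ * z * x) y * (δ (z⁻¹ * y⁻¹ * z * y) x)⁻¹ ∧
      z⁻¹ * (y⁻¹⁻¹ * x⁻¹⁻¹ * y⁻¹ * x⁻¹)⁻¹ * z * (y⁻¹⁻¹ * x⁻¹⁻¹ * y⁻¹ * x⁻¹) =
        ((x * y)⁻¹ * z * (x * y))⁻¹ * ((y * x)⁻¹ * z * (y * x)) ∧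
      z⁻¹ * (y⁻¹⁻¹ * x⁻¹⁻¹ * y⁻¹ * x⁻¹)⁻¹ * z * (y⁻¹⁻¹ * x⁻¹⁻¹ * y⁻¹ * x⁻¹) ∈ Z ∧
      z⁻¹ * (y⁻¹⁻¹ * x⁻¹⁻¹ * y⁻¹ * x⁻¹)⁻¹ * z * (y⁻¹⁻¹ * x⁻¹⁻¹ * y⁻¹ * x⁻¹) ∈
        Subgroup.center G := by
  intro x y z
  set a := δ (z⁻¹ * x⁻¹ * z * x) y with ha_def
  set b := δ (z⁻¹ * y⁻¹ * z * y) x with hb_def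
  have haZ : a ∈ Z := by
    rw [ha_def, hδ]; exact mul_mem (hμZ _ _) (inv_mem (hμZ _ _))
  have hbZ : b ∈ Z := by
    rw [hb_def, hδ]; exact mul_mem (hμZ _ _) (inv_mem (hμZ _ _))
  set d := a * b⁻¹ with hd_def
  have hdZ : d ∈ Z := mul_mem haZ (inv_mem hbZ)
  have hdc : ∀ g : G, g * d = d * g :=
    fun g => Subgroup.mem_center_iff.mp (hZcentral hdZ) g
  have heq : (y * x)⁻¹ * z * (y * x) = (x * y)⁻¹ * z * (x * y) * d := by
    have h := hC3 x y z
    rw [hd_def]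
    calc (y * x)⁻¹ * z * (y * x)
        = (y * x)⁻¹ * z * (y * x) * b * b⁻¹ := by group
      _ = (x * y)⁻¹ * z * (x * y) * a * b⁻¹ := by rw [h]
      _ = (x * y)⁻¹ * z * (x * y) * (a * b⁻¹) := by group
  have key : z * (y * x) = (y * x) * ((x * y)⁻¹ * z * (x * y) * d) := by
    rw [← heq]; group
  have h1 : z * (y * x * y⁻¹ * x⁻¹) = (y * x * y⁻¹ * x⁻¹) * z * d := by
    calc z * (y * x * y⁻¹ * x⁻¹)
        = (z * (y * x)) * (x * y)⁻¹ := by group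
      _ = ((y * x) * ((x * y)⁻¹ * z * (x * y) * d)) * (x * y)⁻¹ := by rw [key]
      _ = (y * x) * (x * y)⁻¹ * z * ((x * y) * d * (x * y)⁻¹) := by group
      _ = (y * x) * (x * y)⁻¹ * z * (d * (x * y) * (x * y)⁻¹) := by rw [hdc (x * y)]
      _ = (y * x * y⁻¹ * x⁻¹) * z * d := by group
  have hmain : z⁻¹ * (y⁻¹⁻¹ * x⁻¹⁻¹ * y⁻¹ * x⁻¹)⁻¹ * z * (y⁻¹⁻¹ * x⁻¹⁻¹ * y⁻¹ * x⁻¹) = d := by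
    simp only [inv_inv]
    calc z⁻¹ * (y * x * y⁻¹ * x⁻¹)⁻¹ * z * (y * x * y⁻¹ * x⁻¹)
        = z⁻¹ * (y * x * y⁻¹ * x⁻¹)⁻¹ * (z * (y * x * y⁻¹ * x⁻¹)) := by group
      _ = z⁻¹ * (y * x * y⁻¹ * x⁻¹)⁻¹ * ((y * x * y⁻¹ * x⁻¹) * z * d) := by rw [h1]
      _ = d := by group
  refine ⟨hmain, ?_, hmain ▸ hdZ, hmain ▸ hZcentral hdZ⟩
  rw [hmain, heq]
  group
end

section
/- In the modification setup, assume condition (C3). Then the group G is nilpotent of nilpotency class at most three; that is, the fourth term of the lower central series of G is trivial: [[[G,G],G],G] = 1. -/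
open scoped commutatorElement

/-- In the modification setup, under (C3), the group G is nilpotent of class at most
three: the fourth term of the lower central series of G is trivial. -/
theorem stmt_9 {G : Type*} [Group G] (Z K N : Subgroup G)
    (hZK : Z ≤ K) (hKN : K ≤ N)
    (hNnormal : N.Normal)
    (hNab : ∀ a ∈ N, ∀ b ∈ N, a * b = b * a)
    (hGN : ∀ x y : G, x⁻¹ * y⁻¹ * x * y ∈ N)
    (hZcentral : Z ≤ Subgroup.center G)
    (hKnormal : K.Normal)
    (hNK : ∀ n ∈ N, ∀ g : G, n⁻¹ * g⁻¹ * n * g ∈ K)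
    (μ : G → G → G)
    (hμZ : ∀ x y : G, μ x y ∈ Z)
    (hμK : ∀ x x' y y' : G, x⁻¹ * x' ∈ K → y⁻¹ * y' ∈ K → μ x y = μ x' y')
    (hμ1 : ∀ x : G, μ x 1 = 1) (hμ1' : ∀ x : G, μ 1 x = 1)
    (δ : G → G → G) (hδ : ∀ x y : G, δ x y = μ x y * (μ y x)⁻¹)
    (hC3 : ∀ x y z : G,
      (y * x)⁻¹ * z * (y * x) * δ (z⁻¹ * y⁻¹ * z * y) x =
      (x * y)⁻¹ * z * (x * y) * δ (z⁻¹ * x⁻¹ * z * x) y) :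
    (⊤ : Subgroup G).lowerCentralSeries 3 = ⊥ := by
  -- Z is a normal subgroup, being central
  have hZn : Z.Normal := by
    constructor
    intro n hn g
    have hcomm := Subgroup.mem_center_iff.mp (hZcentral hn) g
    have hgn : g * n * g⁻¹ = n := by rw [hcomm]; group
    rwa [hgn]
  haveI := hZn
  -- key consequence of (C3): commutators commute with everything modulo Z
  have hmem : ∀ a b g : G,
      (a * b * a⁻¹ * b⁻¹ * g)⁻¹ * (g * (a * b * a⁻¹ * b⁻¹)) ∈ Z := by
    intro a b g
    have h := hC3 a⁻¹ b⁻¹ ((b⁻¹ * a⁻¹) * g * (b⁻¹ * a⁻¹)⁻¹)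
    rw [hδ, hδ] at h
    set z := (b⁻¹ * a⁻¹) * g * (b⁻¹ * a⁻¹)⁻¹ with hz
    set d1 := μ (z⁻¹ * b⁻¹⁻¹ * z * b⁻¹) a⁻¹ * (μ a⁻¹ (z⁻¹ * b⁻¹⁻¹ * z * b⁻¹))⁻¹ with hd1
    set d2 := μ (z⁻¹ * a⁻¹⁻¹ * z * a⁻¹) b⁻¹ * (μ b⁻¹ (z⁻¹ * a⁻¹⁻¹ * z * a⁻¹))⁻¹ with hd2
    have hd1Z : d1 ∈ Z := mul_mem (hμZ _ _) (inv_mem (hμZ _ _))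
    have hd2Z : d2 ∈ Z := mul_mem (hμZ _ _) (inv_mem (hμZ _ _))
    have key : (a * b * a⁻¹ * b⁻¹ * g)⁻¹ * (g * (a * b * a⁻¹ * b⁻¹)) = d1 * d2⁻¹ := by
      calc (a * b * a⁻¹ * b⁻¹ * g)⁻¹ * (g * (a * b * a⁻¹ * b⁻¹))
          = ((b⁻¹ * a⁻¹)⁻¹ * z * (b⁻¹ * a⁻¹))⁻¹ *
            ((a⁻¹ * b⁻¹)⁻¹ * z * (a⁻¹ * b⁻¹) * d2 * d2⁻¹) := by
            rw [hz]; group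
        _ = ((b⁻¹ * a⁻¹)⁻¹ * z * (b⁻¹ * a⁻¹))⁻¹ *
            ((b⁻¹ * a⁻¹)⁻¹ * z * (b⁻¹ * a⁻¹) * d1 * d2⁻¹) := by rw [← h]
        _ = d1 * d2⁻¹ := by group
    rw [key]
    exact mul_mem hd1Z (inv_mem hd2Z)
  -- commutators are central in G / Z
  have hcentral : ∀ a b : G, QuotientGroup.mk' Z ⁅a, b⁆ ∈ Subgroup.center (G ⧸ Z) := by
    intro a b
    rw [Subgroup.mem_center_iff]
    intro q
    obtain ⟨g, rfl⟩ := QuotientGroup.mk'_surjective Z q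
    rw [← map_mul, ← map_mul]
    show ((g * ⁅a, b⁆ : G) : G ⧸ Z) = ((⁅a, b⁆ * g : G) : G ⧸ Z)
    rw [QuotientGroup.eq]
    have h' : (g * (a * b * a⁻¹ * b⁻¹))⁻¹ * (a * b * a⁻¹ * b⁻¹ * g) =
        ((a * b * a⁻¹ * b⁻¹ * g)⁻¹ * (g * (a * b * a⁻¹ * b⁻¹)))⁻¹ := by group
    rw [commutatorElement_def, h']
    exact inv_mem (hmem a b g)
  have hLCS1 : (⊤ : Subgroup G).lowerCentralSeries 1 ≤
      Subgroup.comap (QuotientGroup.mk' Z) (Subgroup.center (G ⧸ Z)) := by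
    rw [Subgroup.top_lowerCentralSeries_one, commutator_def, Subgroup.commutator_le]
    intro p _ q _
    exact hcentral p q
  have hLCS2 : (⊤ : Subgroup G).lowerCentralSeries 2 ≤ Subgroup.center G := by
    have h2 : (⊤ : Subgroup G).lowerCentralSeries 2 = ⁅(⊤ : Subgroup G).lowerCentralSeries 1, (⊤ : Subgroup G)⁆ :=
      Subgroup.lowerCentralSeries_succ ⊤ 1
    rw [h2, Subgroup.commutator_le]
    intro u hu g _
    apply hZcentral
    have h1 : QuotientGroup.mk' Z ⁅u, g⁆ = 1 := by
      rw [map_commutatorElement, commutatorElement_eq_one_iff_commute]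
      exact (Subgroup.mem_center_iff.mp (hLCS1 hu) (QuotientGroup.mk' Z g)).symm
    have hk : ⁅u, g⁆ ∈ (QuotientGroup.mk' Z).ker := h1
    rwa [QuotientGroup.ker_mk'] at hk
  exact Subgroup.lowerCentralSeries_succ_eq_bot ⊤ hLCS2
end

section
/- In the modification setup, assume conditions (C1), (C2) and (C3). Then the following are equivalent: (a) z * [y,x] = [y,x] * z for all x, y, z ∈ G (equivalently, the commutator subgroup [G,G] is contained in the center of the loop (G,*), i.e., (G,*) has nilpotency class at most two); (b) δ([x,y],z)·δ([y,z],x)·δ([z,x],y) = 1 for all x, y, z ∈ G. -/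
/-- In the modification setup, under (C1)-(C3): the loop (G,*) has nilpotency class
at most two iff δ([x,y],z)·δ([y,z],x)·δ([z,x],y) = 1 for all x, y, z. -/
theorem stmt_13 {G : Type*} [Group G] (Z K N : Subgroup G)
    (hZK : Z ≤ K) (hKN : K ≤ N)
    (hNnormal : N.Normal)
    (hNab : ∀ a ∈ N, ∀ b ∈ N, a * b = b * a)
    (hGN : ∀ x y : G, x⁻¹ * y⁻¹ * x * y ∈ N)
    (hZcentral : Z ≤ Subgroup.center G)
    (hKnormal : K.Normal)
    (hNK : ∀ n ∈ N, ∀ g : G, n⁻¹ * g⁻¹ * n * g ∈ K)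
    (μ : G → G → G)
    (hμZ : ∀ x y : G, μ x y ∈ Z)
    (hμK : ∀ x x' y y' : G, x⁻¹ * x' ∈ K → y⁻¹ * y' ∈ K → μ x y = μ x' y')
    (hμ1 : ∀ x : G, μ x 1 = 1) (hμ1' : ∀ x : G, μ 1 x = 1)
    (star : G → G → G) (hstar : ∀ x y : G, star x y = x * y * μ x y)
    (δ : G → G → G) (hδ : ∀ x y : G, δ x y = μ x y * (μ y x)⁻¹)
    (hC1 : ∀ x y z : G, (x ∈ N ∨ y ∈ N ∨ z ∈ N) → μ (x * y) z = μ x z * μ y z)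
    (hC2 : ∀ x y z : G, (x ∈ N ∨ y ∈ N ∨ z ∈ N) → μ x (y * z) = μ x y * μ x z)
    (hC3 : ∀ x y z : G,
      (y * x)⁻¹ * z * (y * x) * δ (z⁻¹ * y⁻¹ * z * y) x =
      (x * y)⁻¹ * z * (x * y) * δ (z⁻¹ * x⁻¹ * z * x) y) :
    (∀ x y z : G, star z (y⁻¹ * x⁻¹ * y * x) = star (y⁻¹ * x⁻¹ * y * x) z) ↔
    (∀ x y z : G,
      δ (x⁻¹ * y⁻¹ * x * y) z * δ (y⁻¹ * z⁻¹ * y * z) x *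
        δ (z⁻¹ * x⁻¹ * z * x) y = 1) := by
  -- μ-values are central
  have hμC : ∀ a b g : G, Commute (μ a b) g := fun a b g =>
    (Subgroup.mem_center_iff.mp (hZcentral (hμZ a b)) g).symm
  have hδC : ∀ a b g : G, Commute (δ a b) g := by
    intro a b g
    rw [hδ]
    exact (hμC a b g).mul_left (hμC b a g).inv_left
  -- linearity in inverses (first and second slot), when the element is in N
  have hμinvl : ∀ a b : G, a ∈ N → μ a⁻¹ b = (μ a b)⁻¹ := by
    intro a b ha
    have h := hC1 a a⁻¹ b (Or.inl ha)
    rw [mul_inv_cancel, hμ1'] at h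
    exact eq_inv_of_mul_eq_one_right h.symm
  have hμinvr : ∀ a b : G, a ∈ N → μ b a⁻¹ = (μ b a)⁻¹ := by
    intro a b ha
    have h := hC2 b a a⁻¹ (Or.inr (Or.inl ha))
    rw [mul_inv_cancel, hμ1] at h
    exact eq_inv_of_mul_eq_one_right h.symm
  have hδinv : ∀ a b : G, a ∈ N → δ a⁻¹ b = (δ a b)⁻¹ := by
    intro a b ha
    rw [hδ, hδ, hμinvl a b ha, hμinvr a b ha, mul_inv_rev, inv_inv]
    exact ((hμC a b (μ b a)).inv_left).eq
  -- δ depends only on the K-coset of its first argument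
  have hδK : ∀ a a' b : G, a⁻¹ * a' ∈ K → δ a b = δ a' b := by
    intro a a' b h
    have hb : b⁻¹ * b ∈ K := by rw [inv_mul_cancel]; exact K.one_mem
    rw [hδ, hδ, hμK a a' b b h hb, hμK b b a a' hb h]
  -- commutators are invariant mod K under N-perturbation of the first argument
  have hcommK : ∀ z x k : G, k ∈ N →
      (z⁻¹ * x⁻¹ * z * x)⁻¹ * ((z * k)⁻¹ * x⁻¹ * (z * k) * x) ∈ K := by
    intro z x k hk
    have hc : z⁻¹ * x⁻¹ * z * x ∈ N := hGN z x
    have hcm : k⁻¹ * (z⁻¹ * x⁻¹ * z * x) = (z⁻¹ * x⁻¹ * z * x) * k⁻¹ :=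
      hNab _ (N.inv_mem hk) _ hc
    have h1 : (z⁻¹ * x⁻¹ * z * x)⁻¹ * ((z * k)⁻¹ * x⁻¹ * (z * k) * x)
        = k⁻¹ * x⁻¹ * k * x := by
      calc (z⁻¹ * x⁻¹ * z * x)⁻¹ * ((z * k)⁻¹ * x⁻¹ * (z * k) * x)
          = (z⁻¹ * x⁻¹ * z * x)⁻¹ * (k⁻¹ * (z⁻¹ * x⁻¹ * z * x)) * (x⁻¹ * k * x) := by
            group
        _ = (z⁻¹ * x⁻¹ * z * x)⁻¹ * ((z⁻¹ * x⁻¹ * z * x) * k⁻¹) * (x⁻¹ * k * x) := by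
            rw [hcm]
        _ = k⁻¹ * x⁻¹ * k * x := by group
    rw [h1]
    exact hNK k hk x
  -- key consequence of (C3):
  have hkey : ∀ x y z : G,
      (y⁻¹ * x⁻¹ * y * x)⁻¹ * z * (y⁻¹ * x⁻¹ * y * x) * z⁻¹ =
      δ (z⁻¹ * x⁻¹ * z * x) y * (δ (z⁻¹ * y⁻¹ * z * y) x)⁻¹ := by
    intro x y z
    have hk : z⁻¹ * (x * y) * z * (x * y)⁻¹ ∈ N := by
      have := hGN z (x * y)⁻¹; rwa [inv_inv] at this
    have h := hC3 x y (z * (z⁻¹ * (x * y) * z * (x * y)⁻¹))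
    have e1 : δ ((z * (z⁻¹ * (x * y) * z * (x * y)⁻¹))⁻¹ * x⁻¹ *
        (z * (z⁻¹ * (x * y) * z * (x * y)⁻¹)) * x) y = δ (z⁻¹ * x⁻¹ * z * x) y :=
      (hδK _ _ y (hcommK z x _ hk)).symm
    have e2 : δ ((z * (z⁻¹ * (x * y) * z * (x * y)⁻¹))⁻¹ * y⁻¹ *
        (z * (z⁻¹ * (x * y) * z * (x * y)⁻¹)) * y) x = δ (z⁻¹ * y⁻¹ * z * y) x :=
      (hδK _ _ x (hcommK z y _ hk)).symm
    rw [e1, e2] at h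
    have e3 : (x * y)⁻¹ * (z * (z⁻¹ * (x * y) * z * (x * y)⁻¹)) * (x * y) = z := by
      group
    have e4 : (y * x)⁻¹ * (z * (z⁻¹ * (x * y) * z * (x * y)⁻¹)) * (y * x) =
        (y⁻¹ * x⁻¹ * y * x)⁻¹ * z * (y⁻¹ * x⁻¹ * y * x) := by group
    rw [e3, e4] at h
    -- h : u⁻¹ * z * u * δ₂ = z * δ₁
    have h' : (y⁻¹ * x⁻¹ * y * x)⁻¹ * z * (y⁻¹ * x⁻¹ * y * x) =
        z * δ (z⁻¹ * x⁻¹ * z * x) y * (δ (z⁻¹ * y⁻¹ * z * y) x)⁻¹ := by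
      rw [← h]; group
    rw [h']
    have hcc : (δ (z⁻¹ * x⁻¹ * z * x) y * (δ (z⁻¹ * y⁻¹ * z * y) x)⁻¹) * z =
        z * (δ (z⁻¹ * x⁻¹ * z * x) y * (δ (z⁻¹ * y⁻¹ * z * y) x)⁻¹) :=
      ((hδC _ _ z).mul_left (hδC _ _ z).inv_left).eq
    calc z * δ (z⁻¹ * x⁻¹ * z * x) y * (δ (z⁻¹ * y⁻¹ * z * y) x)⁻¹ * z⁻¹
        = z * (δ (z⁻¹ * x⁻¹ * z * x) y * (δ (z⁻¹ * y⁻¹ * z * y) x)⁻¹) * z⁻¹ := by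
          group
      _ = (δ (z⁻¹ * x⁻¹ * z * x) y * (δ (z⁻¹ * y⁻¹ * z * y) x)⁻¹) * z * z⁻¹ := by
          rw [← hcc]
      _ = δ (z⁻¹ * x⁻¹ * z * x) y * (δ (z⁻¹ * y⁻¹ * z * y) x)⁻¹ := by group
  constructor
  · -- (a) → (b)
    intro ha x y z
    have hu : y⁻¹ * x⁻¹ * y * x ∈ N := hGN y x
    have h1 := ha x y z
    rw [hstar, hstar] at h1
    -- deduce u⁻¹ z u = z * δ u z
    have hB : (y⁻¹ * x⁻¹ * y * x)⁻¹ * z * (y⁻¹ * x⁻¹ * y * x) =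
        z * δ (y⁻¹ * x⁻¹ * y * x) z := by
      rw [hδ]
      calc (y⁻¹ * x⁻¹ * y * x)⁻¹ * z * (y⁻¹ * x⁻¹ * y * x)
          = (y⁻¹ * x⁻¹ * y * x)⁻¹ * (z * (y⁻¹ * x⁻¹ * y * x) * μ z (y⁻¹ * x⁻¹ * y * x))
              * (μ z (y⁻¹ * x⁻¹ * y * x))⁻¹ := by group
        _ = (y⁻¹ * x⁻¹ * y * x)⁻¹ *
              ((y⁻¹ * x⁻¹ * y * x) * z * μ (y⁻¹ * x⁻¹ * y * x) z)
              * (μ z (y⁻¹ * x⁻¹ * y * x))⁻¹ := by rw [h1]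
        _ = z * (μ (y⁻¹ * x⁻¹ * y * x) z * (μ z (y⁻¹ * x⁻¹ * y * x))⁻¹) := by group
    have hT : (y⁻¹ * x⁻¹ * y * x)⁻¹ * z * (y⁻¹ * x⁻¹ * y * x) * z⁻¹ =
        δ (y⁻¹ * x⁻¹ * y * x) z := by
      have hc := (hδC (y⁻¹ * x⁻¹ * y * x) z z).eq
      calc (y⁻¹ * x⁻¹ * y * x)⁻¹ * z * (y⁻¹ * x⁻¹ * y * x) * z⁻¹
          = ((y⁻¹ * x⁻¹ * y * x)⁻¹ * z * (y⁻¹ * x⁻¹ * y * x)) * z⁻¹ := by group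
        _ = z * δ (y⁻¹ * x⁻¹ * y * x) z * z⁻¹ := by rw [hB]
        _ = δ (y⁻¹ * x⁻¹ * y * x) z * z * z⁻¹ := by rw [← hc]
        _ = δ (y⁻¹ * x⁻¹ * y * x) z := by group
    -- use hkey to compute δ([z,x],y)
    have hzx : δ (z⁻¹ * x⁻¹ * z * x) y =
        δ (y⁻¹ * x⁻¹ * y * x) z * (δ (y⁻¹ * z⁻¹ * y * z) x)⁻¹ := by
      have hk2 := hkey x y z
      rw [hT] at hk2
      rw [show z⁻¹ * y⁻¹ * z * y = (y⁻¹ * z⁻¹ * y * z)⁻¹ from by group,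
        hδinv _ x (hGN y z), inv_inv] at hk2
      -- hk2 : δ u z = δ [z,x] y * δ [y,z] x
      rw [hk2]; group
    rw [show x⁻¹ * y⁻¹ * x * y = (y⁻¹ * x⁻¹ * y * x)⁻¹ from by group,
      hδinv _ z hu, hzx]
    have hc := (hδC (y⁻¹ * z⁻¹ * y * z) x (δ (y⁻¹ * x⁻¹ * y * x) z)).eq
    calc (δ (y⁻¹ * x⁻¹ * y * x) z)⁻¹ * δ (y⁻¹ * z⁻¹ * y * z) x *
          (δ (y⁻¹ * x⁻¹ * y * x) z * (δ (y⁻¹ * z⁻¹ * y * z) x)⁻¹)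
        = (δ (y⁻¹ * x⁻¹ * y * x) z)⁻¹ *
            (δ (y⁻¹ * z⁻¹ * y * z) x * δ (y⁻¹ * x⁻¹ * y * x) z) *
            (δ (y⁻¹ * z⁻¹ * y * z) x)⁻¹ := by group
      _ = (δ (y⁻¹ * x⁻¹ * y * x) z)⁻¹ *
            (δ (y⁻¹ * x⁻¹ * y * x) z * δ (y⁻¹ * z⁻¹ * y * z) x) *
            (δ (y⁻¹ * z⁻¹ * y * z) x)⁻¹ := by rw [hc]
      _ = 1 := by group
  · -- (b) → (a)
    intro hb x y z
    have hu : y⁻¹ * x⁻¹ * y * x ∈ N := hGN y x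
    rw [hstar, hstar]
    have hb1 := hb x y z
    rw [show x⁻¹ * y⁻¹ * x * y = (y⁻¹ * x⁻¹ * y * x)⁻¹ from by group,
      hδinv _ z hu] at hb1
    -- hb1 : (δ u z)⁻¹ * δ B x * δ C y = 1
    have hC' : δ (z⁻¹ * x⁻¹ * z * x) y =
        (δ (y⁻¹ * z⁻¹ * y * z) x)⁻¹ * δ (y⁻¹ * x⁻¹ * y * x) z := by
      have h2 : δ (z⁻¹ * x⁻¹ * z * x) y =
          ((δ (y⁻¹ * x⁻¹ * y * x) z)⁻¹ * δ (y⁻¹ * z⁻¹ * y * z) x)⁻¹ :=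
        eq_inv_of_mul_eq_one_right hb1
      rw [h2]; group
    have hk2 := hkey x y z
    rw [show z⁻¹ * y⁻¹ * z * y = (y⁻¹ * z⁻¹ * y * z)⁻¹ from by group,
      hδinv _ x (hGN y z), inv_inv, hC'] at hk2
    -- hk2 : u⁻¹ z u z⁻¹ = (δ B x)⁻¹ * δ u z * δ B x
    have hT : (y⁻¹ * x⁻¹ * y * x)⁻¹ * z * (y⁻¹ * x⁻¹ * y * x) * z⁻¹ =
        δ (y⁻¹ * x⁻¹ * y * x) z := by
      rw [hk2, mul_assoc, (hδC (y⁻¹ * x⁻¹ * y * x) z (δ (y⁻¹ * z⁻¹ * y * z) x)).eq]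
      group
    have hδz : δ (y⁻¹ * x⁻¹ * y * x) z * z = z * δ (y⁻¹ * x⁻¹ * y * x) z :=
      (hδC (y⁻¹ * x⁻¹ * y * x) z z).eq
    calc z * (y⁻¹ * x⁻¹ * y * x) * μ z (y⁻¹ * x⁻¹ * y * x)
        = (y⁻¹ * x⁻¹ * y * x) *
            (((y⁻¹ * x⁻¹ * y * x)⁻¹ * z * (y⁻¹ * x⁻¹ * y * x) * z⁻¹) * z) *
            μ z (y⁻¹ * x⁻¹ * y * x) := by group
      _ = (y⁻¹ * x⁻¹ * y * x) * (δ (y⁻¹ * x⁻¹ * y * x) z * z) *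
            μ z (y⁻¹ * x⁻¹ * y * x) := by rw [hT]
      _ = (y⁻¹ * x⁻¹ * y * x) * (z * δ (y⁻¹ * x⁻¹ * y * x) z) *
            μ z (y⁻¹ * x⁻¹ * y * x) := by rw [hδz]
      _ = (y⁻¹ * x⁻¹ * y * x) * z * μ (y⁻¹ * x⁻¹ * y * x) z := by
            rw [hδ]; group
end

section
/- In the modification setup, assume conditions (C1), (C2) and (C3), and assume that G has nilpotency class at most two (i.e., [G,G] is contained in the center of G). Then δ([y,z],x)·δ([z,x],y) = 1 for all x, y, z ∈ G. -/
/-- In the modification setup, under (C1)-(C3) and G of class at most two,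
δ([y,z],x)·δ([z,x],y) = 1 for all x, y, z. -/
theorem stmt_14 {G : Type*} [Group G] (Z K N : Subgroup G)
    (hZK : Z ≤ K) (hKN : K ≤ N)
    (hNnormal : N.Normal)
    (hNab : ∀ a ∈ N, ∀ b ∈ N, a * b = b * a)
    (hGN : ∀ x y : G, x⁻¹ * y⁻¹ * x * y ∈ N)
    (hZcentral : Z ≤ Subgroup.center G)
    (hKnormal : K.Normal)
    (hNK : ∀ n ∈ N, ∀ g : G, n⁻¹ * g⁻¹ * n * g ∈ K)
    (μ : G → G → G)
    (hμZ : ∀ x y : G, μ x y ∈ Z)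
    (hμK : ∀ x x' y y' : G, x⁻¹ * x' ∈ K → y⁻¹ * y' ∈ K → μ x y = μ x' y')
    (hμ1 : ∀ x : G, μ x 1 = 1) (hμ1' : ∀ x : G, μ 1 x = 1)
    (δ : G → G → G) (hδ : ∀ x y : G, δ x y = μ x y * (μ y x)⁻¹)
    (hC1 : ∀ x y z : G, (x ∈ N ∨ y ∈ N ∨ z ∈ N) → μ (x * y) z = μ x z * μ y z)
    (hC2 : ∀ x y z : G, (x ∈ N ∨ y ∈ N ∨ z ∈ N) → μ x (y * z) = μ x y * μ x z)
    (hC3 : ∀ x y z : G,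
      (y * x)⁻¹ * z * (y * x) * δ (z⁻¹ * y⁻¹ * z * y) x =
      (x * y)⁻¹ * z * (x * y) * δ (z⁻¹ * x⁻¹ * z * x) y)
    (hclass2 : ∀ x y : G, x⁻¹ * y⁻¹ * x * y ∈ Subgroup.center G) :
    ∀ x y z : G,
      δ (y⁻¹ * z⁻¹ * y * z) x * δ (z⁻¹ * x⁻¹ * z * x) y = 1 := by

  intro x y z
  -- δ is "anti-symmetric" in its first argument on N
  have hδinv : ∀ a b : G, a ∈ N → δ a⁻¹ b = (δ a b)⁻¹ := by
    intro a b ha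
    have h1 : μ a⁻¹ b * μ a b = 1 := by
      rw [← hC1 a⁻¹ a b (Or.inl (inv_mem ha))]; simp [hμ1']
    have h2 : μ b a⁻¹ * μ b a = 1 := by
      rw [← hC2 b a⁻¹ a (Or.inr (Or.inl (inv_mem ha)))]; simp [hμ1]
    have e1 : μ a⁻¹ b = (μ a b)⁻¹ := eq_inv_of_mul_eq_one_left h1
    have e2 : μ b a⁻¹ = (μ b a)⁻¹ := eq_inv_of_mul_eq_one_left h2
    have hcomm : (μ a b)⁻¹ * μ b a = μ b a * (μ a b)⁻¹ := by
      have hc := Subgroup.mem_center_iff.mp (hZcentral (hμZ b a))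
      have := hc ((μ a b)⁻¹)
      rw [this]
    rw [hδ, hδ, e1, e2, inv_inv, mul_inv_rev, inv_inv, hcomm]
  have hc : ∀ g : G, g * (x⁻¹ * y⁻¹ * x * y) = (x⁻¹ * y⁻¹ * x * y) * g :=
    Subgroup.mem_center_iff.mp (hclass2 x y)
  have key : (x * y)⁻¹ * z * (x * y) = (y * x)⁻¹ * z * (y * x) := by
    have h := hc ((y * x)⁻¹ * z * (y * x))
    calc (x * y)⁻¹ * z * (x * y)
        = (x⁻¹ * y⁻¹ * x * y)⁻¹ *
            ((y * x)⁻¹ * z * (y * x) * (x⁻¹ * y⁻¹ * x * y)) := by group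
      _ = (x⁻¹ * y⁻¹ * x * y)⁻¹ *
            ((x⁻¹ * y⁻¹ * x * y) * ((y * x)⁻¹ * z * (y * x))) := by rw [h]
      _ = (y * x)⁻¹ * z * (y * x) := by group
  have hmain : δ (z⁻¹ * y⁻¹ * z * y) x = δ (z⁻¹ * x⁻¹ * z * x) y := by
    have h := hC3 x y z
    rw [key] at h
    exact mul_left_cancel h
  have hinvform : y⁻¹ * z⁻¹ * y * z = (z⁻¹ * y⁻¹ * z * y)⁻¹ := by group
  rw [hinvform, hδinv _ _ (hGN z y), hmain, inv_mul_cancel]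
end

section
/- In the modification setup, assume conditions (C1), (C2) and (C3). Then the following two conditions are equivalent: (a) G has nilpotency class at most two and there exist x, y, z ∈ G with z * [y,x] ≠ [y,x] * z (so that the loop (G,*) is of nilpotency class three while G is of class two); (b) δ([x,y],z) = δ([x,z],y) for all x, y, z ∈ G, and δ([x,y],z) ≠ 1 for some x, y, z ∈ G. -/
/-- In the modification setup, under (C1)-(C3): Q is of nilpotency class three with
G of class two iff δ([x,y],z) = δ([x,z],y) for all x,y,z and δ([x,y],z) ≠ 1 for
some x,y,z. -/
theorem stmt_15 {G : Type*} [Group G] (Z K N : Subgroup G)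
    (hZK : Z ≤ K) (hKN : K ≤ N)
    (hNnormal : N.Normal)
    (hNab : ∀ a ∈ N, ∀ b ∈ N, a * b = b * a)
    (hGN : ∀ x y : G, x⁻¹ * y⁻¹ * x * y ∈ N)
    (hZcentral : Z ≤ Subgroup.center G)
    (hKnormal : K.Normal)
    (hNK : ∀ n ∈ N, ∀ g : G, n⁻¹ * g⁻¹ * n * g ∈ K)
    (μ : G → G → G)
    (hμZ : ∀ x y : G, μ x y ∈ Z)
    (hμK : ∀ x x' y y' : G, x⁻¹ * x' ∈ K → y⁻¹ * y' ∈ K → μ x y = μ x' y')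
    (hμ1 : ∀ x : G, μ x 1 = 1) (hμ1' : ∀ x : G, μ 1 x = 1)
    (star : G → G → G) (hstar : ∀ x y : G, star x y = x * y * μ x y)
    (δ : G → G → G) (hδ : ∀ x y : G, δ x y = μ x y * (μ y x)⁻¹)
    (hC1 : ∀ x y z : G, (x ∈ N ∨ y ∈ N ∨ z ∈ N) → μ (x * y) z = μ x z * μ y z)
    (hC2 : ∀ x y z : G, (x ∈ N ∨ y ∈ N ∨ z ∈ N) → μ x (y * z) = μ x y * μ x z)
    (hC3 : ∀ x y z : G,
      (y * x)⁻¹ * z * (y * x) * δ (z⁻¹ * y⁻¹ * z * y) x =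
      (x * y)⁻¹ * z * (x * y) * δ (z⁻¹ * x⁻¹ * z * x) y) :
    ((∀ x y : G, x⁻¹ * y⁻¹ * x * y ∈ Subgroup.center G) ∧
      (∃ x y z : G, star z (y⁻¹ * x⁻¹ * y * x) ≠ star (y⁻¹ * x⁻¹ * y * x) z)) ↔
    ((∀ x y z : G, δ (x⁻¹ * y⁻¹ * x * y) z = δ (x⁻¹ * z⁻¹ * x * z) y) ∧
      (∃ x y z : G, δ (x⁻¹ * y⁻¹ * x * y) z ≠ 1)) := by

  constructor
  · rintro ⟨h2, x, y, z, hne⟩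
    have key : ∀ a b c : G, (b*a)⁻¹*c*(b*a) = (a*b)⁻¹*c*(a*b) := by
      intro a b c
      have h2' := h2 a⁻¹ b⁻¹
      simp only [inv_inv] at h2'
      have hc := Subgroup.mem_center_iff.mp h2' c
      have hu : (a*b*a⁻¹*b⁻¹)⁻¹ * (c * (a*b*a⁻¹*b⁻¹)) = c := by
        rw [hc]; group
      calc (b*a)⁻¹*c*(b*a)
          = (b*a)⁻¹*((a*b*a⁻¹*b⁻¹)⁻¹ * (c * (a*b*a⁻¹*b⁻¹)))*(b*a) := by rw [hu]
        _ = (a*b)⁻¹*c*(a*b) := by group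
    constructor
    · intro x y z
      have h3 := hC3 z y x
      rw [key z y x] at h3
      exact mul_left_cancel h3
    · refine ⟨y, x, z, ?_⟩
      intro h1
      apply hne
      have hw := Subgroup.mem_center_iff.mp (h2 y x) z
      have hμeq : μ (y⁻¹*x⁻¹*y*x) z = μ z (y⁻¹*x⁻¹*y*x) := by
        have := hδ (y⁻¹*x⁻¹*y*x) z
        rw [h1] at this
        have := this.symm
        rwa [mul_inv_eq_one] at this
      rw [hstar, hstar, hw, hμeq]
  · rintro ⟨hd, x, y, z, hdz⟩
    have hconj : ∀ a b c : G, (b*c)⁻¹*a*(b*c) = (c*b)⁻¹*a*(c*b) := by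
      intro a b c
      have h3 := hC3 c b a
      rw [hd a b c] at h3
      exact mul_right_cancel h3
    have hcen : ∀ a b : G, a⁻¹*b⁻¹*a*b ∈ Subgroup.center G := by
      intro a b
      rw [Subgroup.mem_center_iff]
      intro g
      have H := hconj g a⁻¹ b⁻¹
      calc g * (a⁻¹*b⁻¹*a*b)
          = a⁻¹*b⁻¹*((a⁻¹*b⁻¹)⁻¹*g*(a⁻¹*b⁻¹))*(a*b) := by group
        _ = a⁻¹*b⁻¹*((b⁻¹*a⁻¹)⁻¹*g*(b⁻¹*a⁻¹))*(a*b) := by rw [H]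
        _ = a⁻¹*b⁻¹*a*b*g := by group
    refine ⟨hcen, y, x, z, ?_⟩
    intro heq
    apply hdz
    have hw := Subgroup.mem_center_iff.mp (hcen x y) z
    rw [hstar, hstar, hw] at heq
    have hμeq : μ z (x⁻¹*y⁻¹*x*y) = μ (x⁻¹*y⁻¹*x*y) z := by
      exact mul_left_cancel heq
    rw [hδ, ← hμeq, mul_inv_cancel]
end

section
/- In the modification setup, assume conditions (C1), (C2) and (C3), and assume that G has nilpotency class at most two (i.e., [G,G] ≤ Z(G)). Then the map f : G³ → G defined by f(x,y,z) = δ([x,y],z) satisfies: (i) f is symmetric, i.e., f(x,y,z) is invariant under every permutation of its three arguments; (ii) f(x,y,z)² = 1 for all x, y, z; (iii) f is additive in each argument, e.g. f(x₁x₂,y,z) = f(x₁,y,z)·f(x₂,y,z) for all x₁, x₂, y, z; and (iv) f(x,y,z) depends only on the cosets xN, yN, zN, e.g. f(xn,y,z) = f(x,y,z) for every n ∈ N. Hence f induces a symmetric triadditive map (G/N)³ → Z whose values have order dividing two, and this induced map is nontrivial whenever δ([x₀,y₀],z₀) ≠ 1 for some x₀, y₀, z₀ ∈ G. -/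
private lemma aux_central_calc {G : Type*} [Group G] {q s : G}
    (hq : ∀ g : G, Commute q g) (hs : ∀ g : G, Commute s g) (p r : G) :
    p * q * (r * s)⁻¹ = (p * r⁻¹) * (q * s⁻¹) := by
  have h : Commute (q * s⁻¹) r⁻¹ := ((hq r⁻¹).mul_left ((hs r⁻¹).inv_left))
  calc p * q * (r * s)⁻¹ = p * ((q * s⁻¹) * r⁻¹) := by group
    _ = p * (r⁻¹ * (q * s⁻¹)) := by rw [h.eq]
    _ = (p * r⁻¹) * (q * s⁻¹) := by rw [mul_assoc]

/-- In the modification setup, under (C1)-(C3) and G of class at most two, the map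
f(x,y,z) = δ([x,y],z) is symmetric, of exponent two, triadditive, depends only on
cosets modulo N, and takes values in Z. -/
theorem stmt_16 {G : Type*} [Group G] (Z K N : Subgroup G)
    (hZK : Z ≤ K) (hKN : K ≤ N)
    (hNnormal : N.Normal)
    (hNab : ∀ a ∈ N, ∀ b ∈ N, a * b = b * a)
    (hGN : ∀ x y : G, x⁻¹ * y⁻¹ * x * y ∈ N)
    (hZcentral : Z ≤ Subgroup.center G)
    (hKnormal : K.Normal)
    (hNK : ∀ n ∈ N, ∀ g : G, n⁻¹ * g⁻¹ * n * g ∈ K)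
    (μ : G → G → G)
    (hμZ : ∀ x y : G, μ x y ∈ Z)
    (hμK : ∀ x x' y y' : G, x⁻¹ * x' ∈ K → y⁻¹ * y' ∈ K → μ x y = μ x' y')
    (hμ1 : ∀ x : G, μ x 1 = 1) (hμ1' : ∀ x : G, μ 1 x = 1)
    (δ : G → G → G) (hδ : ∀ x y : G, δ x y = μ x y * (μ y x)⁻¹)
    (hC1 : ∀ x y z : G, (x ∈ N ∨ y ∈ N ∨ z ∈ N) → μ (x * y) z = μ x z * μ y z)
    (hC2 : ∀ x y z : G, (x ∈ N ∨ y ∈ N ∨ z ∈ N) → μ x (y * z) = μ x y * μ x z)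
    (hC3 : ∀ x y z : G,
      (y * x)⁻¹ * z * (y * x) * δ (z⁻¹ * y⁻¹ * z * y) x =
      (x * y)⁻¹ * z * (x * y) * δ (z⁻¹ * x⁻¹ * z * x) y)
    (hclass2 : ∀ x y : G, x⁻¹ * y⁻¹ * x * y ∈ Subgroup.center G)
    (f : G → G → G → G)
    (hf : ∀ x y z : G, f x y z = δ (x⁻¹ * y⁻¹ * x * y) z) :
    (∀ x y z : G,
      f x y z = f x z y ∧ f x y z = f y x z ∧ f x y z = f y z x ∧
      f x y z = f z x y ∧ f x y z = f z y x) ∧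
    (∀ x y z : G, f x y z * f x y z = 1) ∧
    (∀ x₁ x₂ y z : G, f (x₁ * x₂) y z = f x₁ y z * f x₂ y z) ∧
    (∀ x y₁ y₂ z : G, f x (y₁ * y₂) z = f x y₁ z * f x y₂ z) ∧
    (∀ x y z₁ z₂ : G, f x y (z₁ * z₂) = f x y z₁ * f x y z₂) ∧
    (∀ x y z : G, ∀ n ∈ N,
      f (x * n) y z = f x y z ∧ f x (y * n) z = f x y z ∧ f x y (z * n) = f x y z) ∧
    (∀ x y z : G, f x y z ∈ Z) := by
  -- basic commuting facts
  have hZcomm : ∀ a : G, a ∈ Z → ∀ g : G, Commute a g := fun a ha g =>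
    (Subgroup.mem_center_iff.mp (hZcentral ha) g).symm
  have hμcomm : ∀ x y g : G, Commute (μ x y) g := fun x y g => hZcomm _ (hμZ x y) g
  have hδmem : ∀ a b : G, δ a b ∈ Z := fun a b => by
    rw [hδ]; exact Z.mul_mem (hμZ a b) (Z.inv_mem (hμZ b a))
  -- δ vanishes on K
  have hμK1 : ∀ k ∈ K, ∀ x : G, μ k x = 1 := by
    intro k hk x
    have h := hμK k 1 x x (by simpa using K.inv_mem hk) (by simpa using K.one_mem)
    rw [h, hμ1']
  have hμK1' : ∀ k ∈ K, ∀ x : G, μ x k = 1 := by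
    intro k hk x
    have h := hμK x x k 1 (by simpa using K.one_mem) (by simpa using K.inv_mem hk)
    rw [h, hμ1]
  have hδK1 : ∀ k ∈ K, ∀ x : G, δ k x = 1 := by
    intro k hk x; rw [hδ, hμK1 k hk, hμK1' k hk]; simp
  have hδ1 : ∀ g : G, δ 1 g = 1 := by
    intro g; rw [hδ, hμ1', hμ1]; simp
  -- additivity of δ
  have hδadd1 : ∀ a ∈ N, ∀ b ∈ N, ∀ g : G, δ (a * b) g = δ a g * δ b g := by
    intro a ha b hb g
    rw [hδ, hδ, hδ, hC1 a b g (Or.inl ha), hC2 g a b (Or.inr (Or.inl ha))]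
    exact aux_central_calc (hμcomm b g) (hμcomm g b) _ _
  have hδadd2 : ∀ a ∈ N, ∀ g h : G, δ a (g * h) = δ a g * δ a h := by
    intro a ha g h
    rw [hδ, hδ, hδ, hC2 a g h (Or.inl ha), hC1 g h a (Or.inr (Or.inr ha))]
    exact aux_central_calc (hμcomm a h) (hμcomm h a) _ _
  have hδinv1 : ∀ a ∈ N, ∀ g : G, δ a⁻¹ g = (δ a g)⁻¹ := by
    intro a ha g
    have h := hδadd1 a ha a⁻¹ (N.inv_mem ha) g
    rw [mul_inv_cancel, hδ1] at h
    exact eq_inv_of_mul_eq_one_right h.symm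
  -- class-two facts
  have hcc : ∀ x y g : G, Commute (x⁻¹ * y⁻¹ * x * y) g := fun x y g =>
    (Subgroup.mem_center_iff.mp (hclass2 x y) g).symm
  have hconj : ∀ x y z : G, (y * x)⁻¹ * z * (y * x) = (x * y)⁻¹ * z * (x * y) := by
    intro x y z
    have hwz : (x * y * x⁻¹ * y⁻¹) * z = z * (x * y * x⁻¹ * y⁻¹) := by
      have h := (hcc x⁻¹ y⁻¹ z).eq
      simpa using h
    have h1 : (x * y)⁻¹ * z * (x * y) =
        (y * x)⁻¹ * ((x * y * x⁻¹ * y⁻¹)⁻¹ * (z * (x * y * x⁻¹ * y⁻¹))) * (y * x) := by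
      group
    rw [← hwz] at h1
    rw [h1]; group
  have hC3' : ∀ x y z : G, δ (z⁻¹ * y⁻¹ * z * y) x = δ (z⁻¹ * x⁻¹ * z * x) y := by
    intro x y z
    have h := hC3 x y z
    rw [hconj x y z] at h
    exact mul_left_cancel h
  -- symmetry pieces
  have hsw23 : ∀ a b c : G, f a b c = f a c b := fun a b c => by
    rw [hf, hf]; exact hC3' c b a
  have hsw12 : ∀ a b c : G, f b a c = (f a b c)⁻¹ := by
    intro a b c
    rw [hf, hf]
    have h1 : b⁻¹ * a⁻¹ * b * a = (a⁻¹ * b⁻¹ * a * b)⁻¹ := by group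
    rw [h1, hδinv1 _ (hGN a b)]
  have h5 : ∀ a b c : G, f a b c = f c b a := by
    intro a b c
    calc f a b c = (f b a c)⁻¹ := by rw [hsw12 a b c, inv_inv]
      _ = (f b c a)⁻¹ := by rw [hsw23 b a c]
      _ = ((f c b a)⁻¹)⁻¹ := by rw [hsw12 c b a]
      _ = f c b a := inv_inv _
  have hself : ∀ a b c : G, f a b c = (f a b c)⁻¹ := by
    intro a b c
    calc f a b c = f c b a := h5 a b c
      _ = f c a b := hsw23 c b a
      _ = (f a c b)⁻¹ := hsw12 a c b
      _ = (f a b c)⁻¹ := by rw [hsw23 a b c]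
  have hsq : ∀ a b c : G, f a b c * f a b c = 1 := fun a b c =>
    mul_eq_one_iff_eq_inv.mpr (hself a b c)
  have hinv : ∀ a b c : G, (f a b c)⁻¹ = f a b c := fun a b c => (hself a b c).symm
  have hsym12 : ∀ a b c : G, f a b c = f b a c := fun a b c =>
    ((hsw12 a b c).trans (hinv a b c)).symm
  have hsym : ∀ a b c : G, f a b c = f b c a := by
    intro a b c
    calc f a b c = f b a c := hsym12 a b c
      _ = f b c a := hsw23 b a c
  -- triadditivity
  have hcadd : ∀ x₁ x₂ y : G,
      (x₁ * x₂)⁻¹ * y⁻¹ * (x₁ * x₂) * y =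
        (x₁⁻¹ * y⁻¹ * x₁ * y) * (x₂⁻¹ * y⁻¹ * x₂ * y) := by
    intro x₁ x₂ y
    have h := (hcc x₁ y x₂).eq
    have h1 : (x₁ * x₂)⁻¹ * y⁻¹ * (x₁ * x₂) * y =
        x₂⁻¹ * ((x₁⁻¹ * y⁻¹ * x₁ * y) * x₂) * (x₂⁻¹ * y⁻¹ * x₂ * y) := by group
    rw [h1, h]; group
  have hadd1 : ∀ x₁ x₂ y z : G, f (x₁ * x₂) y z = f x₁ y z * f x₂ y z := by
    intro x₁ x₂ y z
    rw [hf, hf, hf, hcadd, hδadd1 _ (hGN x₁ y) _ (hGN x₂ y)]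
  have hadd3 : ∀ x y z₁ z₂ : G, f x y (z₁ * z₂) = f x y z₁ * f x y z₂ := by
    intro x y z₁ z₂
    rw [hf, hf, hf]
    exact hδadd2 _ (hGN x y) z₁ z₂
  have hadd2 : ∀ x y₁ y₂ z : G, f x (y₁ * y₂) z = f x y₁ z * f x y₂ z := by
    intro x y₁ y₂ z
    rw [hsym12 x (y₁ * y₂) z, hadd1, hsym12 y₁ x z, hsym12 y₂ x z]
  -- coset invariance
  have hfN : ∀ x y : G, ∀ n ∈ N, f x y n = 1 := by
    intro x y n hn
    rw [h5 x y n, hf]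
    exact hδK1 _ (hNK n hn y) x
  -- assemble
  refine ⟨?_, hsq, hadd1, hadd2, hadd3, ?_, ?_⟩
  · intro x y z
    exact ⟨hsw23 x y z, hsym12 x y z, hsym x y z, (hsym z x y).symm, (h5 x y z)⟩
  · intro x y z n hn
    refine ⟨?_, ?_, ?_⟩
    · rw [hsym (x*n) y z, hadd3, hfN y z n hn, mul_one, ← hsym x y z]
    · rw [hsym12 x (y * n) z, hsym (y*n) x z, hadd3, hfN x z n hn, mul_one,
        ← hsw23 x y z]
    · rw [hadd3, hfN x y n hn, mul_one]
  · intro x y z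
    rw [hf]; exact hδmem _ _
end

section
/- Let K = (ℤ/2ℤ)³ and let V = (ℤ/2ℤ)² be the Klein four-group, written additively. For (c₁,c₂) ∈ V define φ_{(c₁,c₂)} : K → K by φ_{(c₁,c₂)}(a₀,a₁,a₂) = (a₀ + c₂a₁ + c₁a₂, a₁, a₂), and define γ : V → K by γ(c₁,c₂) = (c₁ + c₂ + c₁c₂, c₁, c₂). Then each φ_{(c₁,c₂)} is an automorphism of K, the map (c₁,c₂) ↦ φ_{(c₁,c₂)} is a group homomorphism from V to Aut(K) (i.e., φ_{c+d} = φ_c ∘ φ_d), and γ is a crosshomomorphism: γ(c+d) = γ(c) + φ_c(γ(d)) for all c, d ∈ V. -/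
/-- The explicit maps φ and γ on K = (ℤ/2)³ and V = (ℤ/2)²: each φ_c is an
automorphism of K, φ is a homomorphism V → Aut(K), and γ is a crosshomomorphism. -/
theorem stmt_18
    (φ : ZMod 2 × ZMod 2 → (ZMod 2 × ZMod 2 × ZMod 2) → (ZMod 2 × ZMod 2 × ZMod 2))
    (hφ : ∀ (c : ZMod 2 × ZMod 2) (a : ZMod 2 × ZMod 2 × ZMod 2),
      φ c a = (a.1 + c.2 * a.2.1 + c.1 * a.2.2, a.2.1, a.2.2))
    (γ : ZMod 2 × ZMod 2 → ZMod 2 × ZMod 2 × ZMod 2)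
    (hγ : ∀ c : ZMod 2 × ZMod 2, γ c = (c.1 + c.2 + c.1 * c.2, c.1, c.2)) :
    (∀ c, Function.Bijective (φ c) ∧
      ∀ a b : ZMod 2 × ZMod 2 × ZMod 2, φ c (a + b) = φ c a + φ c b) ∧
    (∀ c d : ZMod 2 × ZMod 2, φ (c + d) = φ c ∘ φ d) ∧
    (∀ c d : ZMod 2 × ZMod 2, γ (c + d) = γ c + φ c (γ d)) := by
  refine ⟨fun c => ⟨?_, fun a b => ?_⟩, fun c d => ?_, fun c d => ?_⟩
  · have h : Function.Involutive (φ c) := by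
      intro a
      simp only [hφ]
      refine Prod.ext ?_ rfl
      simp only []
      ring_nf
      have h2 : ∀ x : ZMod 2, x + x = 0 := by decide
      obtain ⟨c1, c2⟩ := c; obtain ⟨a0, a1, a2⟩ := a
      revert c1 c2 a0 a1 a2; decide
    exact h.bijective
  · simp only [hφ, Prod.fst_add, Prod.snd_add, Prod.mk_add_mk]
    refine Prod.ext ?_ rfl
    simp only []; ring
  · funext a
    simp only [hφ, Function.comp_apply, Prod.fst_add, Prod.snd_add]
    refine Prod.ext ?_ rfl
    obtain ⟨c1, c2⟩ := c; obtain ⟨d1, d2⟩ := d; obtain ⟨a0, a1, a2⟩ := a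
    revert c1 c2 d1 d2 a0 a1 a2; decide
  · simp only [hφ, hγ, Prod.fst_add, Prod.snd_add, Prod.mk_add_mk]
    obtain ⟨c1, c2⟩ := c; obtain ⟨d1, d2⟩ := d
    revert c1 c2 d1 d2; decide
end

section
/- In the modification setup, assume conditions (C1) and (C2), assume that every element z ∈ Z satisfies z² = 1, and assume that x² lies in the center of G for every x ∈ G. Then for all x, y ∈ G the left and right inner mappings are involutions, L(x,y)∘L(x,y) = id and R(x,y)∘R(x,y) = id, and the middle inner mappings satisfy T(x)(T(x)z) = z·δ([z,x],x) for all x, z ∈ G; in particular, if moreover δ([z,x],x) = 1 for all x, z ∈ G, then every T(x) is also an involution and the inner mapping group of the loop (G,*) is generated by involutions. -/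
/-- In the modification setup, under (C1), (C2), exponent-two Z, and central squares,
the left and right inner mappings are involutions, T(x)² z = z·δ([z,x],x), and if
δ([z,x],x) = 1 always then every T(x) is an involution. -/
theorem stmt_19 {G : Type*} [Group G] (Z K N : Subgroup G)
    (hZK : Z ≤ K) (hKN : K ≤ N)
    (hNnormal : N.Normal)
    (hNab : ∀ a ∈ N, ∀ b ∈ N, a * b = b * a)
    (hGN : ∀ x y : G, x⁻¹ * y⁻¹ * x * y ∈ N)
    (hZcentral : Z ≤ Subgroup.center G)
    (hKnormal : K.Normal)
    (hNK : ∀ n ∈ N, ∀ g : G, n⁻¹ * g⁻¹ * n * g ∈ K)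
    (μ : G → G → G)
    (hμZ : ∀ x y : G, μ x y ∈ Z)
    (hμK : ∀ x x' y y' : G, x⁻¹ * x' ∈ K → y⁻¹ * y' ∈ K → μ x y = μ x' y')
    (hμ1 : ∀ x : G, μ x 1 = 1) (hμ1' : ∀ x : G, μ 1 x = 1)
    (δ : G → G → G) (hδ : ∀ x y : G, δ x y = μ x y * (μ y x)⁻¹)
    (A : G → G → G → G)
    (hA : ∀ x y z : G, A x y z = μ x y * μ (x * y) z * (μ x (y * z))⁻¹ * (μ y z)⁻¹)
    (L : G → G → G → G) (hL : ∀ x y w : G, L x y w = w * A x y w)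
    (R : G → G → G → G) (hR : ∀ x y w : G, R x y w = w * A w x y)
    (T : G → G → G)
    (hT : ∀ x w : G, T x w = (x⁻¹ * w * x) * μ w x * (μ x (x⁻¹ * w * x))⁻¹)
    (hC1 : ∀ x y z : G, (x ∈ N ∨ y ∈ N ∨ z ∈ N) → μ (x * y) z = μ x z * μ y z)
    (hC2 : ∀ x y z : G, (x ∈ N ∨ y ∈ N ∨ z ∈ N) → μ x (y * z) = μ x y * μ x z)
    (hZ2 : ∀ z ∈ Z, z * z = 1)
    (hsq : ∀ x : G, x * x ∈ Subgroup.center G) :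
    (∀ x y : G, L x y ∘ L x y = id ∧ R x y ∘ R x y = id) ∧
    (∀ x z : G, T x (T x z) = z * δ (z⁻¹ * x⁻¹ * z * x) x) ∧
    ((∀ x z : G, δ (z⁻¹ * x⁻¹ * z * x) x = 1) → ∀ x : G, T x ∘ T x = id) := by
  -- A-values lie in Z
  have hAZ : ∀ u v w : G, A u v w ∈ Z := by
    intro u v w
    rw [hA]
    exact mul_mem (mul_mem (mul_mem (hμZ u v) (hμZ (u*v) w)) (inv_mem (hμZ u (v*w))))
      (inv_mem (hμZ v w))
  -- μ is invariant under right K-translation of either argument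
  have hμr : ∀ u y c : G, c ∈ K → μ u (y * c) = μ u y := by
    intro u y c hc
    refine hμK u u (y*c) y (by simp [one_mem]) ?_
    have : (y*c)⁻¹ * y = c⁻¹ := by group
    rw [this]; exact inv_mem hc
  have hμl : ∀ u y c : G, c ∈ K → μ (u * c) y = μ u y := by
    intro u y c hc
    refine hμK (u*c) u y y ?_ (by simp [one_mem])
    have : (u*c)⁻¹ * u = c⁻¹ := by group
    rw [this]; exact inv_mem hc
  -- A is invariant under right K-translation in each slot we need
  have hAr : ∀ u v w c : G, c ∈ K → A u v (w * c) = A u v w := by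
    intro u v w c hc
    rw [hA, hA]
    rw [hμr (u*v) w c hc, show v * (w * c) = (v * w) * c by group,
      hμr u (v*w) c hc, hμr v w c hc]
  have hAl : ∀ w u v c : G, c ∈ K → A (w * c) u v = A w u v := by
    intro w u v c hc
    have hc' : u⁻¹ * c * u ∈ K := by
      have := hKnormal.conj_mem c hc u⁻¹
      simpa using this
    rw [hA, hA]
    rw [hμl w u c hc, hμl w (u*v) c hc,
      show w * c * u = (w * u) * (u⁻¹ * c * u) by group,
      hμl (w*u) v (u⁻¹*c*u) hc']
  -- abelian computation in the center
  have habel : ∀ a b p r : G, a ∈ Z → b ∈ Z → p ∈ Z → r ∈ Z →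
      a * (b * r)⁻¹ * (a * p) * b⁻¹ = p * r⁻¹ := by
    intro a b p r ha hb hp hr
    set C := Subgroup.center G
    let A' : C := ⟨a, hZcentral ha⟩
    let B' : C := ⟨b, hZcentral hb⟩
    let P' : C := ⟨p, hZcentral hp⟩
    let R' : C := ⟨r, hZcentral hr⟩
    have hA2 : A' * A' = 1 := Subtype.ext (hZ2 a ha)
    have hB2 : B' * B' = 1 := Subtype.ext (hZ2 b hb)
    have key : A' * (B' * R')⁻¹ * (A' * P') * B'⁻¹ = P' * R'⁻¹ := by
      have h1 : A' * (B' * R')⁻¹ * (A' * P') * B'⁻¹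
          = (A' * A') * ((B' * B')⁻¹ * (P' * R'⁻¹)) := by
        letI : CommGroup C := { (inferInstance : Group C) with mul_comm := mul_comm' }
        simp [mul_inv, mul_comm, mul_left_comm, mul_assoc]
      rw [h1, hA2, hB2]; simp
    have := congrArg (Subtype.val) key
    simpa using this
  -- the T² formula
  have keyT : ∀ x z : G, T x (T x z) = z * δ (z⁻¹ * x⁻¹ * z * x) x := by
    intro x z
    have hqN : z⁻¹ * x⁻¹ * z * x ∈ N := hGN z x
    have hcZ : μ z x * (μ x (x⁻¹*z*x))⁻¹ ∈ Z :=
      mul_mem (hμZ z x) (inv_mem (hμZ x _))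
    have hcK : μ z x * (μ x (x⁻¹*z*x))⁻¹ ∈ K := hZK hcZ
    have hcc : ∀ g : G, (μ z x * (μ x (x⁻¹*z*x))⁻¹) * g
        = g * (μ z x * (μ x (x⁻¹*z*x))⁻¹) := fun g =>
      (Subgroup.mem_center_iff.mp (hZcentral hcZ) g).symm
    have hx2 : ∀ g : G, g * (x * x) = (x * x) * g := fun g =>
      Subgroup.mem_center_iff.mp (hsq x) g
    have hTz : T x z = (x⁻¹*z*x) * (μ z x * (μ x (x⁻¹*z*x))⁻¹) := by
      rw [hT]; group
    rw [hTz, hT]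
    have hconj : x⁻¹ * ((x⁻¹*z*x) * (μ z x * (μ x (x⁻¹*z*x))⁻¹)) * x
        = z * (μ z x * (μ x (x⁻¹*z*x))⁻¹) := by
      calc x⁻¹ * ((x⁻¹*z*x) * (μ z x * (μ x (x⁻¹*z*x))⁻¹)) * x
          = x⁻¹*x⁻¹*z*x*((μ z x * (μ x (x⁻¹*z*x))⁻¹)*x) := by group
        _ = x⁻¹*x⁻¹*z*x*(x*(μ z x * (μ x (x⁻¹*z*x))⁻¹)) := by rw [hcc x]
        _ = x⁻¹*x⁻¹*(z*(x*x))*(μ z x * (μ x (x⁻¹*z*x))⁻¹) := by group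
        _ = x⁻¹*x⁻¹*((x*x)*z)*(μ z x * (μ x (x⁻¹*z*x))⁻¹) := by rw [hx2 z]
        _ = z * (μ z x * (μ x (x⁻¹*z*x))⁻¹) := by group
    rw [hconj]
    rw [hμl (x⁻¹*z*x) x _ hcK, hμr x z _ hcK]
    have hq : x⁻¹*z*x = z * (z⁻¹ * x⁻¹ * z * x) := by group
    rw [hq, hC1 z (z⁻¹ * x⁻¹ * z * x) x (Or.inr (Or.inl hqN)),
      hC2 x z (z⁻¹ * x⁻¹ * z * x) (Or.inr (Or.inr hqN)), hδ]
    have := habel (μ z x) (μ x z) (μ (z⁻¹ * x⁻¹ * z * x) x) (μ x (z⁻¹ * x⁻¹ * z * x))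
      (hμZ _ _) (hμZ _ _) (hμZ _ _) (hμZ _ _)
    calc z * (μ z x * (μ x z * μ x (z⁻¹ * x⁻¹ * z * x))⁻¹)
          * (μ z x * μ (z⁻¹ * x⁻¹ * z * x) x) * (μ x z)⁻¹
        = z * (μ z x * (μ x z * μ x (z⁻¹ * x⁻¹ * z * x))⁻¹
          * (μ z x * μ (z⁻¹ * x⁻¹ * z * x) x) * (μ x z)⁻¹) := by group
      _ = z * (μ (z⁻¹ * x⁻¹ * z * x) x * (μ x (z⁻¹ * x⁻¹ * z * x))⁻¹) := by rw [this]
  refine ⟨?_, keyT, ?_⟩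
  · intro x y
    constructor
    · funext w
      simp only [Function.comp_apply, id_eq, hL]
      rw [hAr x y w _ (hZK (hAZ x y w)), mul_assoc, hZ2 _ (hAZ x y w), mul_one]
    · funext w
      simp only [Function.comp_apply, id_eq, hR]
      rw [hAl w x y _ (hZK (hAZ w x y)), mul_assoc, hZ2 _ (hAZ w x y), mul_one]
  · intro h1 x
    funext z
    simp only [Function.comp_apply, id_eq]
    rw [keyT x z, h1, mul_one]
end
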